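/- arXiv:2209.13695 — 7 statements merged into one kernel-verified Lean document; each statement's English description precedes it below -/
import Mathlib

section
/- For every natural number k ≥ 1, the formal power series identity ∑_{n≥0} (n+1−k) · n!/(n+1−2k)! · x^n = (1/2) · (2k)! · (1+x) · x^(2k−1) / (1−x)^(2k+1) holds, where terms with n+1−2k < 0 are interpreted as 0. -/
open PowerSeries

lemma desc_key (d : ℕ) :
    (PowerSeries.mk fun n => (n.descFactorial d : ℚ)) * (1 - PowerSeries.X) ^ (d + 1) =
      PowerSeries.C (d.factorial : ℚ) * PowerSeries.X ^ d := by
  have h1 : (PowerSeries.mk fun n => (n.descFactorial d : ℚ)) =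
      PowerSeries.C (d.factorial : ℚ) * (PowerSeries.X ^ d *
        PowerSeries.mk fun n => (Nat.choose (d + n) d : ℚ)) := by
    ext n
    rw [coeff_C_mul, coeff_X_pow_mul']
    by_cases h : d ≤ n
    · simp only [h, if_true, coeff_mk]
      rw [← Nat.cast_mul, ← Nat.descFactorial_eq_factorial_mul_choose]
      congr 2
      omega
    · simp only [h, if_false, coeff_mk, mul_zero]
      rw [Nat.descFactorial_eq_zero_iff_lt.mpr (by omega), Nat.cast_zero]
  rw [h1, mul_assoc, mul_assoc, mk_add_choose_mul_one_sub_pow_eq_one, mul_one]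

/-- For `k ≥ 1`, `∑_{n≥0} (n+1−k) · n!/(n+1−2k)! · xⁿ = (1/2)(2k)!(1+x)x^{2k−1}/(1−x)^{2k+1}`
as formal power series over `ℚ`, stated with denominators cleared (where
`n!/(n+1−2k)!` is the falling factorial `n·(n−1)⋯(n−2k+2)`, which vanishes when `n+1 < 2k`). -/
theorem stmt_4 (k : ℕ) (hk : 1 ≤ k) :
    (PowerSeries.mk fun n => (((n : ℚ) + 1 - k) * (n.descFactorial (2 * k - 1) : ℚ))) *
        (1 - PowerSeries.X) ^ (2 * k + 1) =
      PowerSeries.C (((2 * k).factorial : ℚ) / 2) * (1 + PowerSeries.X) *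
        PowerSeries.X ^ (2 * k - 1) := by
  have ha : (PowerSeries.mk fun n => (((n : ℚ) + 1 - k) * (n.descFactorial (2 * k - 1) : ℚ))) =
      (PowerSeries.mk fun n => (n.descFactorial (2 * k) : ℚ)) +
        PowerSeries.C (k : ℚ) * PowerSeries.mk fun n => (n.descFactorial (2 * k - 1) : ℚ) := by
    ext n
    rw [map_add, coeff_C_mul, coeff_mk, coeff_mk, coeff_mk]
    by_cases h : 2 * k - 1 ≤ n
    · have h2k : 2 * k = (2 * k - 1) + 1 := by omega
      have hd : n.descFactorial (2 * k) = (n - (2 * k - 1)) * n.descFactorial (2 * k - 1) := by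
        rw [h2k, Nat.descFactorial_succ, Nat.add_sub_cancel]
      rw [hd, Nat.cast_mul, Nat.cast_sub h]
      have : ((n : ℚ) + 1 - k) = ((n : ℚ) - (2 * k - 1 : ℕ)) + k := by
        rw [Nat.cast_sub (by omega)]
        push_cast
        ring
      rw [this]; ring
    · rw [Nat.descFactorial_eq_zero_iff_lt.mpr (by omega),
        Nat.descFactorial_eq_zero_iff_lt.mpr (by omega)]
      push_cast; ring
  have h2k : 2 * k + 1 = (2 * k - 1 + 1) + 1 := by omega
  have key1 := desc_key (2 * k)
  have key2 := desc_key (2 * k - 1)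
  have hfac : ((2 * k).factorial : ℚ) = 2 * k * ((2 * k - 1).factorial : ℚ) := by
    have : 2 * k - 1 + 1 = 2 * k := by omega
    rw [← this, Nat.factorial_succ]
    push_cast [this]
    ring
  rw [ha, add_mul, key1, h2k, pow_succ,
    mul_assoc (PowerSeries.C (k:ℚ)) (PowerSeries.mk _),
    ← mul_assoc (PowerSeries.mk _) ((1 - PowerSeries.X) ^ (2 * k - 1 + 1)), key2]
  have hX : (PowerSeries.X : PowerSeries ℚ) ^ (2 * k) = PowerSeries.X ^ (2 * k - 1) * PowerSeries.X := by
    rw [← pow_succ]; congr 1; omega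
  have e1 : PowerSeries.C (((2 * k).factorial : ℚ)) =
      2 * (PowerSeries.C (k : ℚ) * PowerSeries.C (((2 * k - 1).factorial : ℚ))) := by
    rw [hfac, map_mul, map_mul, mul_assoc]
    congr 1
  have e2 : PowerSeries.C (((2 * k).factorial : ℚ) / 2) =
      PowerSeries.C (k : ℚ) * PowerSeries.C (((2 * k - 1).factorial : ℚ)) := by
    rw [← map_mul]
    congr 1
    rw [hfac]; ring
  rw [hX, e1, e2]
  ring
end

section
/- Let H(x,y) be the unique formal power series with H(0,y)=0 satisfying H = y·(x·(H+1) + x²·H·(H+1))/(1−x). Then the coefficient of x^n y^k in H equals ∑_{j=0}^{n−k} (1/k)·binomial(k, j+1)·binomial(k, j)·binomial(n−j−1, n−k−j) for all n ≥ k ≥ 1. -/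
lemma fin2_decomp (d : Fin 2 →₀ ℕ) :
    d = Finsupp.single 0 (d 0) + Finsupp.single 1 (d 1) := by
  ext a
  fin_cases a <;> simp [Finsupp.single_apply]

lemma pair_apply0 (n k : ℕ) :
    ((Finsupp.single 0 n + Finsupp.single 1 k : Fin 2 →₀ ℕ)) 0 = n := by
  simp [Finsupp.single_apply]

lemma pair_apply1 (n k : ℕ) :
    ((Finsupp.single 0 n + Finsupp.single 1 k : Fin 2 →₀ ℕ)) 1 = k := by
  simp [Finsupp.single_apply]

lemma pair_eq_zero_iff (n k : ℕ) :
    (Finsupp.single 0 n + Finsupp.single 1 k : Fin 2 →₀ ℕ) = 0 ↔ n = 0 ∧ k = 0 := by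
  constructor
  · intro h
    constructor
    · have := congrArg (fun f : Fin 2 →₀ ℕ => f 0) h
      simpa [pair_apply0] using this
    · have := congrArg (fun f : Fin 2 →₀ ℕ => f 1) h
      simpa [pair_apply1] using this
  · rintro ⟨rfl, rfl⟩
    simp

/-- The map from bivariate power series to nested power series. -/
noncomputable def toNested : MvPowerSeries (Fin 2) ℚ →+* PowerSeries (PowerSeries ℚ) where
  toFun F := PowerSeries.mk fun k => PowerSeries.mk fun n =>
    MvPowerSeries.coeff (Finsupp.single 0 n + Finsupp.single 1 k) F
  map_one' := by
    apply PowerSeries.ext; intro k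
    apply PowerSeries.ext; intro n
    rw [PowerSeries.coeff_mk, PowerSeries.coeff_mk, MvPowerSeries.coeff_one]
    by_cases hk : k = 0 <;> by_cases hn : n = 0 <;>
      simp [hk, hn, PowerSeries.coeff_one, pair_eq_zero_iff]
  map_mul' := by
    intro F G
    apply PowerSeries.ext; intro k
    apply PowerSeries.ext; intro n
    rw [PowerSeries.coeff_mk, PowerSeries.coeff_mk, MvPowerSeries.coeff_mul, PowerSeries.coeff_mul, map_sum]
    simp only [PowerSeries.coeff_mk, PowerSeries.coeff_mul]
    rw [← Finset.sum_product']
    refine Finset.sum_bij' (fun p _ => ((p.1 1, p.2 1), (p.1 0, p.2 0)))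
      (fun q _ => (Finsupp.single 0 q.2.1 + Finsupp.single 1 q.1.1,
        Finsupp.single 0 q.2.2 + Finsupp.single 1 q.1.2)) ?_ ?_ ?_ ?_ ?_
    · rintro ⟨d, e⟩ hp
      rw [Finset.HasAntidiagonal.mem_antidiagonal] at hp
      dsimp only
      rw [Finset.mem_product, Finset.HasAntidiagonal.mem_antidiagonal, Finset.HasAntidiagonal.mem_antidiagonal]
      have h1 := congrArg (fun f : Fin 2 →₀ ℕ => f 1) hp
      have h0 := congrArg (fun f : Fin 2 →₀ ℕ => f 0) hp
      simp only [Finsupp.add_apply, Finsupp.single_apply] at h0 h1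
      constructor
      · simpa using h1
      · simpa using h0
    · rintro ⟨⟨k1, k2⟩, ⟨n1, n2⟩⟩ hq
      rw [Finset.mem_product, Finset.HasAntidiagonal.mem_antidiagonal, Finset.HasAntidiagonal.mem_antidiagonal] at hq
      rw [Finset.HasAntidiagonal.mem_antidiagonal]
      obtain ⟨hk', hn'⟩ := hq
      dsimp only at hk' hn' ⊢
      subst hk' hn'
      ext a
      fin_cases a <;> simp [Finsupp.single_apply]
    · rintro ⟨d, e⟩ hp
      dsimp only
      rw [← fin2_decomp, ← fin2_decomp]
    · rintro ⟨⟨k1, k2⟩, ⟨n1, n2⟩⟩ hq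
      dsimp only
      simp [pair_apply0, pair_apply1]
    · rintro ⟨d, e⟩ hp
      dsimp only
      rw [← fin2_decomp, ← fin2_decomp]
  map_zero' := by
    apply PowerSeries.ext; intro k
    apply PowerSeries.ext; intro n
    simp
  map_add' := by
    intro F G
    apply PowerSeries.ext; intro k
    apply PowerSeries.ext; intro n
    simp

open PowerSeries Polynomial in
lemma lagrange_aux {S : Type*} [CommRing S] [IsDomain S] [CharZero S]
    (φ : Polynomial S) (G : PowerSeries S)
    (hG : G = PowerSeries.X * Polynomial.eval₂ ((PowerSeries.C (R := S))) G φ) (k : ℕ) :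
    ∀ m : ℕ, 1 ≤ m → m ≤ k →
      (k : S) * PowerSeries.coeff k (G ^ m) = (m : S) * (φ ^ k).coeff (k - m) := by
  have hdvd : (PowerSeries.X : S⟦X⟧) ∣ G := ⟨_, hG⟩
  have hvan : ∀ s K : ℕ, K < s → PowerSeries.coeff K (G ^ s) = 0 := by
    intro s K h
    have hd : (PowerSeries.X : S⟦X⟧) ^ s ∣ G ^ s := pow_dvd_pow_of_dvd hdvd s
    rw [PowerSeries.X_pow_dvd_iff] at hd
    exact hd K h
  have hexp : ∀ (K m : ℕ), m ≤ K → PowerSeries.coeff K (G ^ m) =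
      ∑ s ∈ Finset.range ((φ ^ m).natDegree + 1),
        (φ ^ m).coeff s * PowerSeries.coeff (K - m) (G ^ s) := by
    intro K m hmK
    conv_lhs => rw [hG]
    rw [mul_pow, ← Polynomial.eval₂_pow, PowerSeries.coeff_X_pow_mul', if_pos hmK,
      Polynomial.eval₂_eq_sum_range, map_sum]
    refine Finset.sum_congr rfl fun s _ => ?_
    rw [PowerSeries.coeff_C_mul]
  induction k using Nat.strong_induction_on with
  | _ k IH =>
  intro m hm hmk
  rcases eq_or_lt_of_le hmk with rfl | hlt
  · have h1 : PowerSeries.coeff m (G ^ m) = (φ ^ m).coeff 0 := by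
      rw [hexp m m le_rfl, Nat.sub_self, Finset.sum_eq_single 0]
      · simp
      · intro s _ hs
        rw [hvan s 0 (by omega), mul_zero]
      · intro h
        exact absurd (Finset.mem_range.mpr (by omega)) h
    rw [h1, Nat.sub_self]
  · set K := k - m with hKdef
    have hK1 : 1 ≤ K := by omega
    have hKk : K < k := by omega
    have step1 := hexp k m hmk
    have step2 : (K : S) * PowerSeries.coeff k (G ^ m) =
        ∑ s ∈ Finset.range ((φ ^ m).natDegree + 1),
          (φ ^ m).coeff s * (if s ≤ K then (s : S) * (φ ^ K).coeff (K - s) else 0) := by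
      rw [step1, Finset.mul_sum]
      refine Finset.sum_congr rfl fun s _ => ?_
      rcases Nat.eq_zero_or_pos s with rfl | hs
      · rw [pow_zero]
        have hkm : ¬ (k - m = 0) := by omega
        simp [PowerSeries.coeff_one, hkm]
      · by_cases hsK : s ≤ K
        · rw [if_pos hsK]
          have hIH := IH K hKk s hs hsK
          linear_combination (φ ^ m).coeff s * hIH
        · rw [if_neg hsK, hvan s K (by omega), mul_zero, mul_zero]
    set g : ℕ → S := fun s =>
      (φ ^ m).coeff s * (if s ≤ K then (s : S) * (φ ^ K).coeff (K - s) else 0) with hg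
    set D := (φ ^ m).natDegree with hD
    have hgzero : ∀ s, D < s → g s = 0 := by
      intro s hs
      simp only [hg, Polynomial.coeff_eq_zero_of_natDegree_lt hs, zero_mul]
    have hgzero' : ∀ s, K < s → g s = 0 := by
      intro s hs
      simp only [hg, if_neg (by omega : ¬ s ≤ K), mul_zero]
    have hrange : ∑ s ∈ Finset.range (D + 1), g s = ∑ s ∈ Finset.range (K + 1), g s := by
      rcases le_total (D + 1) (K + 1) with h | h
      · exact Finset.sum_subset (Finset.range_subset_range.mpr h)
          (fun s _ hs => hgzero s (by simp at hs ⊢; omega))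
      · exact (Finset.sum_subset (Finset.range_subset_range.mpr h)
          (fun s _ hs => hgzero' s (by simp at hs ⊢; omega))).symm
    have step3 : ∑ s ∈ Finset.range (K + 1), g s =
        ((derivative (φ ^ m)) * φ ^ K).coeff (K - 1) := by
      rw [Polynomial.coeff_mul, Finset.Nat.sum_antidiagonal_eq_sum_range_succ_mk,
        Finset.sum_range_succ']
      have hK' : K - 1 + 1 = K := by omega
      simp only [Nat.succ_eq_add_one, hK']
      have hg0 : g 0 = 0 := by simp [hg]
      rw [hg0, add_zero]
      refine Finset.sum_congr rfl fun i hi => ?_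
      rw [Finset.mem_range] at hi
      simp only [hg, if_pos (by omega : i + 1 ≤ K), Polynomial.coeff_derivative]
      have : K - (i + 1) = K - 1 - i := by omega
      rw [this]
      push_cast
      ring
    have hpoly : (k : ℕ) • (derivative (φ ^ m) * φ ^ K) = (m : ℕ) • derivative (φ ^ k) := by
      rw [Polynomial.derivative_pow, Polynomial.derivative_pow]
      have hmk' : φ ^ (m - 1) * φ ^ K = φ ^ (k - 1) := by
        rw [← pow_add]
        congr 1
        omega
      simp only [nsmul_eq_mul]
      calc (k : S[X]) * (Polynomial.C (m : S) * φ ^ (m - 1) * derivative φ * φ ^ K)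
          = (k : S[X]) * Polynomial.C (m : S) * (φ ^ (m - 1) * φ ^ K) * derivative φ := by ring
        _ = (k : S[X]) * Polynomial.C (m : S) * φ ^ (k - 1) * derivative φ := by rw [hmk']
        _ = (m : S[X]) * (Polynomial.C (k : S) * φ ^ (k - 1) * derivative φ) := by
            simp only [Polynomial.C_eq_natCast]; ring
    have e2 : (k : S) * ((derivative (φ ^ m) * φ ^ K).coeff (K - 1)) =
        (m : S) * ((φ ^ k).coeff K * (K : S)) := by
      have h3 := congrArg (fun p : S[X] => p.coeff (K - 1)) hpoly
      simp only [nsmul_eq_mul] at h3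
      simp only [← Polynomial.C_eq_natCast, Polynomial.coeff_C_mul,
        Polynomial.coeff_derivative] at h3
      have hK' : K - 1 + 1 = K := by omega
      rw [hK'] at h3
      have hc : ((K - 1 : ℕ) : S) + 1 = (K : S) := by
        rw [Nat.cast_sub hK1]
        push_cast
        ring
      rw [hc] at h3
      exact h3
    have hKne : (K : S) ≠ 0 := Nat.cast_ne_zero.mpr (by omega)
    apply mul_left_cancel₀ hKne
    calc (K : S) * ((k : S) * PowerSeries.coeff k (G ^ m))
        = (k : S) * ((K : S) * PowerSeries.coeff k (G ^ m)) := by ring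
      _ = (k : S) * ((derivative (φ ^ m) * φ ^ K).coeff (K - 1)) := by
          rw [step2, hrange, step3]
      _ = (m : S) * ((φ ^ k).coeff K * (K : S)) := e2
      _ = (K : S) * ((m : S) * (φ ^ k).coeff (k - m)) := by rw [← hKdef]; ring

instance : CharZero (PowerSeries ℚ) := by
  constructor
  intro a b h
  have := congrArg ((PowerSeries.constantCoeff (R := ℚ))) h
  simpa using this

lemma pair_eq_pair_iff {n k n' k' : ℕ} :
    (Finsupp.single 0 n + Finsupp.single 1 k : Fin 2 →₀ ℕ) =
      Finsupp.single 0 n' + Finsupp.single 1 k' ↔ n = n' ∧ k = k' := by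
  constructor
  · intro h
    constructor
    · have := congrArg (fun f : Fin 2 →₀ ℕ => f 0) h
      simpa [pair_apply0] using this
    · have := congrArg (fun f : Fin 2 →₀ ℕ => f 1) h
      simpa [pair_apply1] using this
  · rintro ⟨rfl, rfl⟩
    rfl

lemma toNested_coeff (F : MvPowerSeries (Fin 2) ℚ) (n k : ℕ) :
    PowerSeries.coeff n (PowerSeries.coeff k (toNested F)) =
      MvPowerSeries.coeff (Finsupp.single 0 n + Finsupp.single 1 k) F := by
  simp [toNested, PowerSeries.coeff_mk]

lemma toNested_X0 :
    toNested (MvPowerSeries.X 0) = (PowerSeries.C (R := PowerSeries ℚ)) PowerSeries.X := by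
  apply PowerSeries.ext; intro k
  apply PowerSeries.ext; intro n
  rw [toNested_coeff, MvPowerSeries.coeff_X, PowerSeries.coeff_C]
  have hs : (Finsupp.single (0 : Fin 2) 1 : Fin 2 →₀ ℕ) =
      Finsupp.single 0 1 + Finsupp.single 1 0 := by simp
  rw [hs]
  simp only [pair_eq_pair_iff]
  by_cases hk : k = 0 <;> simp [hk, PowerSeries.coeff_X]

lemma toNested_X1 :
    toNested (MvPowerSeries.X 1) = PowerSeries.X := by
  apply PowerSeries.ext; intro k
  apply PowerSeries.ext; intro n
  rw [toNested_coeff, MvPowerSeries.coeff_X, PowerSeries.coeff_X]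
  have hs : (Finsupp.single (1 : Fin 2) 1 : Fin 2 →₀ ℕ) =
      Finsupp.single 0 0 + Finsupp.single 1 1 := by simp
  rw [hs]
  simp only [pair_eq_pair_iff]
  by_cases hk : k = 1 <;> simp [hk, PowerSeries.coeff_one]

/-- The series `1 + x + x² + ⋯`. -/
noncomputable def bS : PowerSeries ℚ := PowerSeries.mk 1

/-- The polynomial `x(1+u)(1+xu)/(1-x)` over `ℚ⟦x⟧`. -/
noncomputable def φS : Polynomial (PowerSeries ℚ) :=
  Polynomial.C (PowerSeries.X * bS) *
    ((1 + Polynomial.X) * (1 + Polynomial.C PowerSeries.X * Polynomial.X))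

lemma coeff_natCast_mul (c : ℕ) (W : PowerSeries ℚ) (m : ℕ) :
    PowerSeries.coeff m ((c : PowerSeries ℚ) * W) = (c : ℚ) * PowerSeries.coeff m W := by
  rw [← map_natCast ((PowerSeries.C (R := ℚ))) c, PowerSeries.coeff_C_mul]

lemma phi_coeff (k n : ℕ) (hk : 1 ≤ k) (hkn : k ≤ n) :
    PowerSeries.coeff n ((φS ^ k).coeff (k - 1)) =
      ∑ j ∈ Finset.range (n - k + 1),
        (k.choose (j + 1) : ℚ) * (k.choose j : ℚ) * ((n - j - 1).choose (n - k - j) : ℚ) := by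
  have hφk : φS ^ k = Polynomial.C ((PowerSeries.X * bS) ^ k) *
      ((1 + Polynomial.X) ^ k * (1 + Polynomial.C PowerSeries.X * Polynomial.X) ^ k) := by
    rw [φS, mul_pow, mul_pow, ← map_pow]
  have h2 : (1 + Polynomial.C (PowerSeries.X : PowerSeries ℚ) * Polynomial.X) ^ k
      = ∑ j ∈ Finset.range (k + 1), Polynomial.C ((PowerSeries.X : PowerSeries ℚ) ^ j) *
          Polynomial.X ^ j * ((k.choose j : ℕ) : Polynomial (PowerSeries ℚ)) := by
    rw [add_comm, add_pow]
    refine Finset.sum_congr rfl fun j _ => ?_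
    rw [one_pow, mul_one, mul_pow, ← map_pow]
  have h3 : (((1 + Polynomial.X) ^ k *
      (1 + Polynomial.C (PowerSeries.X : PowerSeries ℚ) * Polynomial.X) ^ k)).coeff (k - 1)
      = ∑ j ∈ Finset.range (k + 1), PowerSeries.X ^ j * ((k.choose j : ℕ) : PowerSeries ℚ) *
          (if j ≤ k - 1 then ((k.choose (k - 1 - j) : ℕ) : PowerSeries ℚ) else 0) := by
    rw [h2, Finset.mul_sum, Polynomial.finset_sum_coeff]
    refine Finset.sum_congr rfl fun j _ => ?_
    have harr : (1 + Polynomial.X : Polynomial (PowerSeries ℚ)) ^ k *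
        (Polynomial.C ((PowerSeries.X : PowerSeries ℚ) ^ j) * Polynomial.X ^ j *
          ((k.choose j : ℕ) : Polynomial (PowerSeries ℚ)))
        = Polynomial.C ((PowerSeries.X : PowerSeries ℚ) ^ j) *
          (((k.choose j : ℕ) : Polynomial (PowerSeries ℚ)) *
            ((1 + Polynomial.X) ^ k * Polynomial.X ^ j)) := by ring
    rw [harr, Polynomial.coeff_C_mul, ← Polynomial.C_eq_natCast, Polynomial.coeff_C_mul,
      Polynomial.coeff_mul_X_pow']
    split_ifs with h
    · rw [Polynomial.coeff_one_add_X_pow]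
      ring
    · rw [mul_zero, mul_zero, mul_zero]
  have hbk : ∀ m : ℕ, PowerSeries.coeff m (bS ^ k) = (((k - 1 + m).choose (k - 1) : ℕ) : ℚ) := by
    intro m
    conv_lhs => rw [show k = (k - 1) + 1 by omega]
    rw [bS, PowerSeries.mk_one_pow_eq_mk_choose_add, PowerSeries.coeff_mk]
  rw [hφk, Polynomial.coeff_C_mul, h3, Finset.mul_sum, map_sum]
  have key : ∀ j, PowerSeries.coeff n ((PowerSeries.X * bS) ^ k *
      (PowerSeries.X ^ j * ((k.choose j : ℕ) : PowerSeries ℚ) *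
        (if j ≤ k - 1 then ((k.choose (k - 1 - j) : ℕ) : PowerSeries ℚ) else 0)))
      = (k.choose j : ℚ) * (if j ≤ k - 1 then (k.choose (k - 1 - j) : ℚ) else 0) *
          (if k + j ≤ n then (((k - 1) + (n - (k + j))).choose (k - 1) : ℚ) else 0) := by
    intro j
    by_cases h1' : j ≤ k - 1
    · rw [if_pos h1', if_pos h1']
      have harr : (PowerSeries.X * bS) ^ k *
          (PowerSeries.X ^ j * ((k.choose j : ℕ) : PowerSeries ℚ) *
            ((k.choose (k - 1 - j) : ℕ) : PowerSeries ℚ))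
          = ((k.choose j : ℕ) : PowerSeries ℚ) * (((k.choose (k - 1 - j) : ℕ) : PowerSeries ℚ) *
            (PowerSeries.X ^ (k + j) * bS ^ k)) := by
        rw [mul_pow, pow_add]; ring
      rw [harr, coeff_natCast_mul, coeff_natCast_mul, PowerSeries.coeff_X_pow_mul']
      by_cases h2' : k + j ≤ n
      · rw [if_pos h2', if_pos h2', hbk]
        ring
      · rw [if_neg h2', if_neg h2']
        ring
    · rw [if_neg h1', if_neg h1']
      simp
  rw [Finset.sum_congr rfl (fun j _ => key j)]
  set t : ℕ → ℚ := fun j => (k.choose j : ℚ) * (if j ≤ k - 1 then (k.choose (k - 1 - j) : ℚ) else 0) *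
      (if k + j ≤ n then (((k - 1) + (n - (k + j))).choose (k - 1) : ℚ) else 0) with ht
  have e1 : ∑ j ∈ Finset.range (k + 1), t j = ∑ j ∈ Finset.range (n + 1), t j := by
    refine Finset.sum_subset (Finset.range_subset_range.mpr (by omega)) fun j hj hj' => ?_
    rw [Finset.mem_range, not_lt] at hj'
    have : k.choose j = 0 := Nat.choose_eq_zero_of_lt (by omega)
    simp [ht, this]
  have e2 : ∑ j ∈ Finset.range (n + 1), t j = ∑ j ∈ Finset.range (n - k + 1), t j := by
    refine (Finset.sum_subset (Finset.range_subset_range.mpr (by omega)) fun j hj hj' => ?_).symm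
    rw [Finset.mem_range, not_lt] at hj'
    have : ¬ (k + j ≤ n) := by omega
    simp [ht, this]
  rw [e1, e2]
  refine Finset.sum_congr rfl fun j hj => ?_
  rw [Finset.mem_range] at hj
  by_cases hjk : j ≤ k - 1
  · have hc1 : k.choose (k - 1 - j) = k.choose (j + 1) := by
      have h := Nat.choose_symm (n := k) (k := j + 1) (by omega)
      rw [show k - (j + 1) = k - 1 - j by omega] at h
      exact h
    have hc2 : (k - 1) + (n - (k + j)) = n - j - 1 := by omega
    have hc3 : (n - j - 1).choose (k - 1) = (n - j - 1).choose (n - k - j) := by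
      have h := Nat.choose_symm (n := n - j - 1) (k := k - 1) (by omega)
      rw [show n - j - 1 - (k - 1) = n - k - j by omega] at h
      exact h.symm
    rw [ht]
    simp only [if_pos hjk, if_pos (show k + j ≤ n by omega), hc1, hc2, hc3]
    ring
  · have h0 : k.choose (j + 1) = 0 := Nat.choose_eq_zero_of_lt (by omega)
    simp [ht, hjk, h0]

open MvPowerSeries

/-- The unique power series `H(x,y)` with `H(0,y) = 0` satisfying
`H = y(x(H+1) + x²H(H+1))/(1−x)` (stated with the denominator cleared) has coefficient of
`xⁿyᵏ` equal to `∑_{j=0}^{n−k} (1/k)·C(k,j+1)·C(k,j)·C(n−j−1, n−k−j)` for `n ≥ k ≥ 1`. -/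
theorem stmt_9 (H : MvPowerSeries (Fin 2) ℚ)
    (h0 : ∀ k : ℕ, MvPowerSeries.coeff (Finsupp.single 1 k) H = 0)
    (hH : (1 - MvPowerSeries.X (0 : Fin 2)) * H =
      MvPowerSeries.X 1 * (MvPowerSeries.X 0 * (H + 1) +
        MvPowerSeries.X 0 ^ 2 * H * (H + 1)))
    (n k : ℕ) (hk : 1 ≤ k) (hkn : k ≤ n) :
    MvPowerSeries.coeff (Finsupp.single 0 n + Finsupp.single 1 k) H =
      ∑ j ∈ Finset.range (n - k + 1),
        (1 / (k : ℚ)) * (k.choose (j + 1) : ℚ) * (k.choose j : ℚ) *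
          ((n - j - 1).choose (n - k - j) : ℚ) := by
  classical
  set G : PowerSeries (PowerSeries ℚ) := toNested H with hGdef
  have h1 := congrArg toNested hH
  simp only [map_mul, map_sub, map_add, map_one, map_pow, toNested_X0, toNested_X1,
    ← hGdef] at h1
  have hb : bS * (1 - PowerSeries.X) = 1 := PowerSeries.mk_one_mul_one_sub_eq_one ℚ
  have hbC : (PowerSeries.C (R := PowerSeries ℚ)) bS *
      (1 - (PowerSeries.C (R := PowerSeries ℚ)) PowerSeries.X) = 1 := by
    rw [show (1 : PowerSeries (PowerSeries ℚ)) - (PowerSeries.C (R := PowerSeries ℚ)) PowerSeries.X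
        = (PowerSeries.C (R := PowerSeries ℚ)) (1 - PowerSeries.X) by rw [map_sub, map_one],
      ← map_mul, hb, map_one]
  have haeval : Polynomial.eval₂ ((PowerSeries.C (R := PowerSeries ℚ))) G φS =
      (PowerSeries.C (R := PowerSeries ℚ)) (PowerSeries.X * bS) *
      ((1 + G) * (1 + (PowerSeries.C (R := PowerSeries ℚ)) PowerSeries.X * G)) := by
    simp [φS, Polynomial.eval₂_mul, Polynomial.eval₂_add, Polynomial.eval₂_one,
      Polynomial.eval₂_X, Polynomial.eval₂_C]
  have hG : G = PowerSeries.X * Polynomial.eval₂ ((PowerSeries.C (R := PowerSeries ℚ))) G φS := by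
    rw [haeval]
    calc G = ((PowerSeries.C (R := PowerSeries ℚ)) bS *
          (1 - (PowerSeries.C (R := PowerSeries ℚ)) PowerSeries.X)) * G := by rw [hbC, one_mul]
      _ = (PowerSeries.C (R := PowerSeries ℚ)) bS *
          ((1 - (PowerSeries.C (R := PowerSeries ℚ)) PowerSeries.X) * G) := by ring
      _ = (PowerSeries.C (R := PowerSeries ℚ)) bS *
          (PowerSeries.X * ((PowerSeries.C (R := PowerSeries ℚ)) PowerSeries.X * (G + 1) +
            (PowerSeries.C (R := PowerSeries ℚ)) PowerSeries.X ^ 2 * G * (G + 1))) := by rw [h1]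
      _ = PowerSeries.X * ((PowerSeries.C (R := PowerSeries ℚ)) (PowerSeries.X * bS) *
          ((1 + G) * (1 + (PowerSeries.C (R := PowerSeries ℚ)) PowerSeries.X * G))) := by
          rw [map_mul]; ring
  have hlag := lagrange_aux φS G hG k 1 le_rfl hk
  rw [pow_one, Nat.cast_one, one_mul] at hlag
  have hmain := congrArg (PowerSeries.coeff n) hlag
  rw [show ((k : ℕ) : PowerSeries ℚ) * PowerSeries.coeff k G
      = (PowerSeries.C (R := ℚ)) ((k : ℕ) : ℚ) * PowerSeries.coeff k G by
        rw [map_natCast ((PowerSeries.C (R := ℚ))) k],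
    PowerSeries.coeff_C_mul, hGdef, toNested_coeff, phi_coeff k n hk hkn] at hmain
  have hkQ : (k : ℚ) ≠ 0 := Nat.cast_ne_zero.mpr (by omega)
  apply mul_left_cancel₀ hkQ
  rw [hmain, Finset.mul_sum]
  refine Finset.sum_congr rfl fun j _ => ?_
  field_simp
end

section
/- A Dyck path μ of semilength n+1 lies in the image of the upward pop-stack (rowmotion-type) operator on the lattice J(Φ⁺_{A_n}) of order ideals of the type A root poset if and only if μ contains no four consecutive steps fall-fall-rise-rise and the only lattice points of μ on the x-axis are its two endpoints (0,0) and (2n+2, 0). -/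
/-- `h : ℕ → ℤ` is the height function of a Dyck path of semilength `m`:
it starts at 0, stays nonnegative, moves by `±1` at each of the `2m` steps,
and is 0 from position `2m` on. -/
def IsDyckHeight (m : ℕ) (h : ℕ → ℤ) : Prop :=
  h 0 = 0 ∧ (∀ i, 2 * m ≤ i → h i = 0) ∧ (∀ i, 0 ≤ h i) ∧
    ∀ i < 2 * m, h (i + 1) - h i = 1 ∨ h (i + 1) - h i = -1

/-- Dyck paths of semilength `m`, ordered pointwise by their height functions.
This poset is isomorphic to the lattice `J(Φ⁺_{A_{m-1}})` of order ideals of the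
type `A_{m-1}` root poset. -/
abbrev DyckPath (m : ℕ) := {h : ℕ → ℤ // IsDyckHeight m h}

/-- The path has no four consecutive steps fall-fall-rise-rise. -/
def NoFFRR (m : ℕ) (h : ℕ → ℤ) : Prop :=
  ¬ ∃ i, i + 4 ≤ 2 * m ∧ h (i + 1) = h i - 1 ∧ h (i + 2) = h (i + 1) - 1 ∧
      h (i + 3) = h (i + 2) + 1 ∧ h (i + 4) = h (i + 3) + 1

/-- The only lattice points of the path on the x-axis are its two endpoints. -/
def OnlyEndpointsOnAxis (m : ℕ) (h : ℕ → ℤ) : Prop :=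
  ∀ i, 0 < i → i < 2 * m → 0 < h i

namespace DyckAux

/-- `i` is a valley (local minimum) of `h`. -/
def valley (h : ℕ → ℤ) (i : ℕ) : Prop :=
  0 < i ∧ h (i - 1) = h i + 1 ∧ h (i + 1) = h i + 1

instance (h : ℕ → ℤ) : DecidablePred (valley h) := fun _ => by
  unfold valley; infer_instance

lemma valley_succ (h : ℕ → ℤ) (k : ℕ) :
    valley h (k + 1) ↔ h k = h (k + 1) + 1 ∧ h (k + 2) = h (k + 1) + 1 := by
  unfold valley
  simp [Nat.add_sub_cancel]

/-- Raise all valleys by 2: the pop-stack operator on height functions. -/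
def pop (h : ℕ → ℤ) : ℕ → ℤ := fun j => if valley h j then h j + 2 else h j

/-- Raise a single position by 2. -/
def raise (h : ℕ → ℤ) (i : ℕ) : ℕ → ℤ := fun j => if j = i then h i + 2 else h j

variable {m : ℕ} {h g : ℕ → ℤ}

lemma valley_lt (hd : IsDyckHeight m h) {i : ℕ} (hv : valley h i) : i < 2 * m := by
  by_contra H
  have h1 : h (i + 1) = 0 := hd.2.1 _ (by omega)
  have h2 : h i = 0 := hd.2.1 _ (by omega)
  have := hv.2.2
  omega

lemma valley_not_adj {i : ℕ} (h1 : valley h i) (h2 : valley h (i + 1)) : False := by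
  rw [valley_succ] at h2
  have := h1.2.2
  omega

lemma pop_isDyck (hd : IsDyckHeight m h) : IsDyckHeight m (pop h) := by
  obtain ⟨h0, hb, hn, hs⟩ := hd
  refine ⟨?_, ?_, ?_, ?_⟩
  · simp only [pop, valley]
    simp only [lt_irrefl, false_and, if_false]
    exact h0
  · intro i hi
    have : ¬ valley h i := fun hv => absurd (valley_lt ⟨h0, hb, hn, hs⟩ hv) (by omega)
    simp [pop, this, hb i hi]
  · intro i
    have := hn i
    unfold pop; split <;> omega
  · intro i hi
    by_cases v1 : valley h i <;> by_cases v2 : valley h (i + 1)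
    · exact absurd v2 (fun h2 => valley_not_adj v1 h2)
    · have := v1.2.2
      simp only [pop, if_pos v1, if_neg v2]
      omega
    · have hv2 := (valley_succ h i).mp v2
      simp only [pop, if_pos v2, if_neg v1]
      omega
    · simp only [pop, if_neg v1, if_neg v2]
      exact hs i hi

lemma raise_isDyck (hd : IsDyckHeight m h) {i : ℕ} (hv : valley h i) :
    IsDyckHeight m (raise h i) := by
  obtain ⟨k, rfl⟩ : ∃ k, i = k + 1 := ⟨i - 1, by have := hv.1; omega⟩
  rw [valley_succ] at hv
  have hlt : k + 1 < 2 * m := valley_lt hd (by rw [valley_succ]; exact hv)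
  obtain ⟨h0, hb, hn, hs⟩ := hd
  refine ⟨?_, ?_, ?_, ?_⟩
  · simp [raise, h0]
  · intro j hj
    have : j ≠ k + 1 := by omega
    simp [raise, this, hb j hj]
  · intro j
    have := hn j
    unfold raise; split
    · have := hn (k + 1); omega
    · omega
  · intro j hj
    by_cases e1 : j = k + 1
    · subst e1
      have := hv.2
      simp only [raise]
      rw [if_neg (by omega : ¬ (k + 1 + 1 = k + 1))]
      simp only [if_true, ite_true, eq_self_iff_true]
      have e : h (k + 1 + 1) = h (k + 2) := by norm_num
      omega
    · by_cases e2 : j + 1 = k + 1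
      · have ej : j = k := by omega
        subst ej
        simp only [raise, if_pos e2, if_neg e1]
        omega
      · simp only [raise, if_neg e1, if_neg e2]
        exact hs j hj

lemma even_sub (hg : IsDyckHeight m g) (hh : IsDyckHeight m h) (j : ℕ) :
    (g j - h j) % 2 = 0 := by
  induction j with
  | zero => rw [hg.1, hh.1]; rfl
  | succ k ih =>
    by_cases hk : k < 2 * m
    · rcases hg.2.2.2 k hk with e1 | e1 <;> rcases hh.2.2.2 k hk with e2 | e2 <;> omega
    · have := hg.2.1 (k + 1) (by omega)
      have := hh.2.1 (k + 1) (by omega)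
      omega

lemma le_def {a b : DyckPath m} : a ≤ b ↔ ∀ j, a.val j ≤ b.val j := Iff.rfl

lemma exists_lt_of_lt {a b : DyckPath m} (hab : a < b) : ∃ j, a.val j < b.val j := by
  have := not_le_of_gt hab
  rw [le_def] at this
  push_neg at this
  exact this

/-- Every cover of `ν` is obtained by raising a single valley. -/
lemma cover_classify {ν z : DyckPath m} (hc : ν ⋖ z) :
    ∃ i, valley ν.val i ∧ z.val = raise ν.val i := by
  classical
  obtain ⟨hlt, hmax⟩ := hc
  have hle : ∀ j, ν.val j ≤ z.val j := le_def.mp hlt.le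
  obtain ⟨j0, hj0⟩ := exists_lt_of_lt hlt
  -- pick a position where ν is minimal among positions where z exceeds ν
  obtain ⟨lb, ⟨i, hieq, hilt⟩, hmin⟩ :=
    Int.exists_least_of_bdd (P := fun x => ∃ j, x = ν.val j ∧ ν.val j < z.val j)
      ⟨0, fun x ⟨j, hx, _⟩ => hx ▸ ν.2.2.2.1 j⟩ ⟨ν.val j0, j0, rfl, hj0⟩
  subst hieq
  have hipos : 0 < i := by
    rcases Nat.eq_zero_or_pos i with rfl | hp
    · rw [ν.2.1, z.2.1] at hilt; omega
    · exact hp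
  have hi2m : i < 2 * m := by
    by_contra H
    rw [ν.2.2.1 i (by omega), z.2.2.1 i (by omega)] at hilt; omega
  obtain ⟨k, rfl⟩ : ∃ k, i = k + 1 := ⟨i - 1, by omega⟩
  have hsl : ν.val (k + 1) - ν.val k = 1 ∨ ν.val (k + 1) - ν.val k = -1 :=
    ν.2.2.2.2 k (by omega)
  have hslz : z.val (k + 1) - z.val k = 1 ∨ z.val (k + 1) - z.val k = -1 :=
    z.2.2.2.2 k (by omega)
  have hsr : ν.val (k + 2) - ν.val (k + 1) = 1 ∨ ν.val (k + 2) - ν.val (k + 1) = -1 :=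
    ν.2.2.2.2 (k + 1) hi2m
  have hsrz : z.val (k + 2) - z.val (k + 1) = 1 ∨ z.val (k + 2) - z.val (k + 1) = -1 :=
    z.2.2.2.2 (k + 1) hi2m
  have hL : ν.val k = ν.val (k + 1) + 1 := by
    rcases hsl with e | e
    · exfalso
      have hzk : ν.val k < z.val k := by have := hle (k + 1); omega
      have := hmin (ν.val k) ⟨k, rfl, hzk⟩
      omega
    · omega
  have hR : ν.val (k + 2) = ν.val (k + 1) + 1 := by
    rcases hsr with e | e
    · omega
    · exfalso
      have hzk : ν.val (k + 2) < z.val (k + 2) := by have := hle (k + 1); omega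
      have := hmin (ν.val (k + 2)) ⟨k + 2, rfl, hzk⟩
      omega
  have hv : valley ν.val (k + 1) := (valley_succ _ _).mpr ⟨hL, hR⟩
  refine ⟨k + 1, hv, ?_⟩
  -- the raised path sits between ν and z, so it equals z
  have hev := even_sub z.2 ν.2 (k + 1)
  have h2 : ν.val (k + 1) + 2 ≤ z.val (k + 1) := by omega
  set r : DyckPath m := ⟨raise ν.val (k + 1), raise_isDyck ν.2 hv⟩ with hr
  have hrz : r ≤ z := by
    rw [le_def]
    intro j
    show (if j = k + 1 then ν.val (k + 1) + 2 else ν.val j) ≤ z.val j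
    split
    · subst ‹j = k + 1›; exact h2
    · exact hle j
  have hνr : ν < r := by
    rw [lt_iff_le_and_ne]
    constructor
    · rw [le_def]
      intro j
      show ν.val j ≤ (if j = k + 1 then ν.val (k + 1) + 2 else ν.val j)
      split
      · subst ‹j = k + 1›; omega
      · exact le_refl _
    · intro hEq
      have h' := congrFun (congrArg Subtype.val hEq) (k + 1)
      simp [hr, raise] at h'
  rcases lt_or_eq_of_le hrz with hlt2 | hEq
  · exact absurd hlt2 (hmax hνr)
  · rw [← hEq]

/-- Raising a valley gives a cover. -/
lemma cover_raise (ν : DyckPath m) {i : ℕ} (hv : valley ν.val i) :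
    ν ⋖ (⟨raise ν.val i, raise_isDyck ν.2 hv⟩ : DyckPath m) := by
  have hlt : ν < ⟨raise ν.val i, raise_isDyck ν.2 hv⟩ := by
    rw [lt_iff_le_and_ne]
    constructor
    · rw [le_def]
      intro j
      show ν.val j ≤ (if j = i then ν.val i + 2 else ν.val j)
      split
      · subst ‹j = i›; omega
      · exact le_refl _
    · intro hEq
      have h' := congrFun (congrArg Subtype.val hEq) i
      simp [raise] at h'
  refine ⟨hlt, ?_⟩
  intro w h1 h2
  have hle1 : ∀ j, ν.val j ≤ w.val j := le_def.mp h1.le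
  have hle2 : ∀ j, w.val j ≤ raise ν.val i j := le_def.mp h2.le
  have hwi : w.val i ≤ ν.val i + 2 := by
    have := hle2 i
    simpa [raise] using this
  have hev := even_sub w.2 ν.2 i
  have hother : ∀ j, j ≠ i → w.val j = ν.val j := by
    intro j hj
    have := hle2 j
    have h2' : raise ν.val i j = ν.val j := if_neg hj
    have := hle1 j
    omega
  have hge := hle1 i
  rcases (by omega : w.val i = ν.val i ∨ w.val i = ν.val i + 2) with e | e
  · -- w = ν, contradicting ν < w
    have : ν = w := by
      apply Subtype.ext
      funext j
      by_cases hj : j = i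
      · subst hj; omega
      · exact (hother j hj).symm
    exact absurd this (ne_of_lt h1)
  · -- w = raise, contradicting w < raise
    have : w = (⟨raise ν.val i, raise_isDyck ν.2 hv⟩ : DyckPath m) := by
      apply Subtype.ext
      funext j
      show w.val j = (if j = i then ν.val i + 2 else ν.val j)
      split
      · subst ‹j = i›; omega
      · exact hother j ‹_›
    exact absurd this (ne_of_lt h2)

/-- The pop of a Dyck path, as a Dyck path. -/
def popPath (ν : DyckPath m) : DyckPath m := ⟨pop ν.val, pop_isDyck ν.2⟩

/-- `popPath ν` is the least upper bound of `ν` together with all its covers. -/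
lemma isLUB_pop (ν : DyckPath m) :
    IsLUB (insert ν {z | ν ⋖ z}) (popPath ν) := by
  constructor
  · rintro x (rfl | hx)
    · rw [le_def]
      intro j
      show x.val j ≤ (if valley x.val j then x.val j + 2 else x.val j)
      split <;> omega
    · obtain ⟨i, hv, hxe⟩ := cover_classify hx
      rw [le_def]
      intro j
      rw [hxe]
      show (if j = i then ν.val i + 2 else ν.val j) ≤ (if valley ν.val j then ν.val j + 2 else ν.val j)
      by_cases hj : j = i
      · subst hj
        rw [if_pos rfl, if_pos hv]
      · rw [if_neg hj]
        split <;> omega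
  · intro w hw
    have hν : ν ≤ w := hw (Set.mem_insert _ _)
    rw [le_def]
    intro j
    show (if valley ν.val j then ν.val j + 2 else ν.val j) ≤ w.val j
    split
    · rename_i hv
      have hc : (⟨raise ν.val j, raise_isDyck ν.2 hv⟩ : DyckPath m) ∈ insert ν {z | ν ⋖ z} :=
        Set.mem_insert_of_mem _ (cover_raise ν hv)
      have := le_def.mp (hw hc) j
      simpa [raise] using this
    · exact le_def.mp hν j

lemma pop_eq (h : ℕ → ℤ) (j : ℕ) : pop h j = if valley h j then h j + 2 else h j := rfl

lemma pop_onlyEndpoints (hd : IsDyckHeight m h) : OnlyEndpointsOnAxis m (pop h) := by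
  intro i hi0 him
  rw [pop_eq]
  split
  · have := hd.2.2.1 i; omega
  · rename_i hnv
    have hn := hd.2.2.1 i
    rcases lt_or_eq_of_le hn with hp | hp
    · exact hp
    · exfalso
      obtain ⟨k, rfl⟩ : ∃ k, i = k + 1 := ⟨i - 1, by omega⟩
      have s1 := hd.2.2.2 k (by omega)
      have s2 : h (k + 2) - h (k + 1) = 1 ∨ h (k + 2) - h (k + 1) = -1 :=
        hd.2.2.2 (k + 1) him
      have n1 := hd.2.2.1 k
      have n2 := hd.2.2.1 (k + 2)
      refine hnv ((valley_succ _ _).mpr ⟨?_, ?_⟩)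
      · rcases s1 with e | e <;> omega
      · show h (k + 2) = h (k + 1) + 1
        rcases s2 with e | e <;> omega

lemma pop_noFFRR (hd : IsDyckHeight m h) : NoFFRR m (pop h) := by
  rintro ⟨i, hle, e1, e2, e3, e4⟩
  rw [pop_eq, pop_eq] at e1 e2 e3 e4
  -- i+2 is not a valley of h
  have hv2 : ¬ valley h (i + 2) := by
    intro hv
    obtain ⟨hfa, hfb⟩ : h (i + 1) = h (i + 2) + 1 ∧ h (i + 3) = h (i + 2) + 1 :=
      (valley_succ h (i + 1)).mp hv
    by_cases hv1 : valley h (i + 1)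
    · exact valley_not_adj hv1 hv
    · rw [if_pos hv, if_neg hv1] at e2
      omega
  -- i+1 is not a valley of h
  have hv1 : ¬ valley h (i + 1) := by
    intro hv
    obtain ⟨hfa, hfb⟩ : h i = h (i + 1) + 1 ∧ h (i + 2) = h (i + 1) + 1 :=
      (valley_succ h i).mp hv
    by_cases hv0 : valley h i
    · exact valley_not_adj hv0 hv
    · rw [if_pos hv, if_neg hv0] at e1
      rw [if_pos hv, if_neg hv2] at e2
      omega
  -- i+3 is not a valley of h
  have hv3 : ¬ valley h (i + 3) := by
    intro hv
    obtain ⟨hfa, hfb⟩ : h (i + 2) = h (i + 3) + 1 ∧ h (i + 4) = h (i + 3) + 1 :=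
      (valley_succ h (i + 2)).mp hv
    by_cases hv4 : valley h (i + 4)
    · exact valley_not_adj hv hv4
    · rw [if_pos hv, if_neg hv2] at e3
      rw [if_pos hv, if_neg hv4] at e4
      omega
  rw [if_neg hv1, if_neg hv2] at e2
  rw [if_neg hv2, if_neg hv3] at e3
  exact hv2 ((valley_succ h (i + 1)).mpr
    ⟨(by omega : h (i + 1) = h (i + 2) + 1), (by omega : h (i + 3) = h (i + 2) + 1)⟩)

/-- `i` is a peak (local maximum) of `h`. -/
def peak (h : ℕ → ℤ) (i : ℕ) : Prop :=
  0 < i ∧ h (i - 1) = h i - 1 ∧ h (i + 1) = h i - 1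

instance (h : ℕ → ℤ) : DecidablePred (peak h) := fun _ => by
  unfold peak; infer_instance

lemma peak_succ (h : ℕ → ℤ) (k : ℕ) :
    peak h (k + 1) ↔ h k = h (k + 1) - 1 ∧ h (k + 2) = h (k + 1) - 1 := by
  unfold peak
  simp [Nat.add_sub_cancel]

/-- Lower all peaks by 2. -/
def unpop (h : ℕ → ℤ) : ℕ → ℤ := fun j => if peak h j then h j - 2 else h j

lemma unpop_eq (h : ℕ → ℤ) (j : ℕ) : unpop h j = if peak h j then h j - 2 else h j := rfl

lemma peak_lt (hd : IsDyckHeight m h) {i : ℕ} (hp : peak h i) : i < 2 * m := by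
  by_contra H
  have h1 : h (i + 1) = 0 := hd.2.1 _ (by omega)
  have h2 : h i = 0 := hd.2.1 _ (by omega)
  have := hp.2.2
  omega

lemma peak_not_adj {i : ℕ} (h1 : peak h i) (h2 : peak h (i + 1)) : False := by
  rw [peak_succ] at h2
  have := h1.2.2
  omega

lemma peak_ge_two (hd : IsDyckHeight m h) (hax : OnlyEndpointsOnAxis m h)
    (hm : 2 ≤ m) {i : ℕ} (hp : peak h i) : 2 ≤ h i := by
  obtain ⟨k, rfl⟩ : ∃ k, i = k + 1 := ⟨i - 1, by have := hp.1; omega⟩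
  have hlt : k + 1 < 2 * m := peak_lt hd hp
  obtain ⟨hL, hR⟩ := (peak_succ h k).mp hp
  have n2 : 0 ≤ h (k + 2) := hd.2.2.1 (k + 2)
  by_contra H
  -- then h (k+1) = 1 and its neighbours are 0
  have h1 : h (k + 1) = 1 := by
    have := hd.2.2.1 (k + 1); omega
  have hk0 : h k = 0 := by omega
  have hk2 : h (k + 2) = 0 := by omega
  have hk2lt : k + 2 < 2 * m := by
    rcases Nat.lt_or_ge (k + 2) (2 * m) with h' | h'
    · exact h'
    · exfalso
      -- k+1 < 2m ≤ k+2, so k+1 = 2m-1; then k > 0 since 2m ≥ 4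
      have hkpos : 0 < k := by omega
      exact absurd (hax k hkpos (by omega)) (by omega)
  exact absurd (hax (k + 2) (by omega) hk2lt) (by omega)

lemma unpop_isDyck (hd : IsDyckHeight m h) (hax : OnlyEndpointsOnAxis m h)
    (hm : 2 ≤ m) : IsDyckHeight m (unpop h) := by
  refine ⟨?_, ?_, ?_, ?_⟩
  · have : ¬ peak h 0 := fun hp => absurd hp.1 (by omega)
    simp [unpop, this, hd.1]
  · intro i hi
    have : ¬ peak h i := fun hp => absurd (peak_lt hd hp) (by omega)
    simp [unpop, this, hd.2.1 i hi]
  · intro i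
    rw [unpop_eq]
    split
    · have := peak_ge_two hd hax hm ‹_›; omega
    · exact hd.2.2.1 i
  · intro i hi
    by_cases p1 : peak h i <;> by_cases p2 : peak h (i + 1)
    · exact absurd p2 (fun h2 => peak_not_adj p1 h2)
    · have := p1.2.2
      simp only [unpop, if_pos p1, if_neg p2]
      omega
    · have hp2 := (peak_succ h i).mp p2
      simp only [unpop, if_pos p2, if_neg p1]
      omega
    · simp only [unpop, if_neg p1, if_neg p2]
      exact hd.2.2.2 i hi

lemma pop_unpop (hd : IsDyckHeight m h) (hff : NoFFRR m h)
    (hax : OnlyEndpointsOnAxis m h) (hm : 2 ≤ m) : pop (unpop h) = h := by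
  have hν := unpop_isDyck hd hax hm
  funext j
  rw [pop_eq]
  by_cases hp : peak h j
  · -- a lowered peak is a valley of the unpopped path; popping restores h j
    obtain ⟨k, rfl⟩ : ∃ k, j = k + 1 := ⟨j - 1, by have := hp.1; omega⟩
    obtain ⟨hL, hR⟩ := (peak_succ h k).mp hp
    have hnpk : ¬ peak h k := by
      intro hpk
      exact peak_not_adj hpk hp
    have hnpk2 : ¬ peak h (k + 2) := fun hpk2 => peak_not_adj hp hpk2
    have e0 : unpop h k = h k := if_neg hnpk
    have e1 : unpop h (k + 1) = h (k + 1) - 2 := if_pos hp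
    have e2 : unpop h (k + 2) = h (k + 2) := if_neg hnpk2
    have hv : valley (unpop h) (k + 1) := (valley_succ _ _).mpr ⟨by omega, by omega⟩
    rw [if_pos hv, e1]
    omega
  · have e1 : unpop h j = h j := if_neg hp
    rw [if_neg ?_, e1]
    intro hv
    obtain ⟨k, rfl⟩ : ∃ k, j = k + 1 := ⟨j - 1, by have := hv.1; omega⟩
    obtain ⟨hvL, hvR⟩ : unpop h k = unpop h (k + 1) + 1 ∧ unpop h (k + 2) = unpop h (k + 1) + 1 :=
      (valley_succ _ _).mp hv
    rw [e1] at hvL hvR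
    have hlt : k + 1 < 2 * m := valley_lt hν hv
    -- right neighbour: not a peak, and h (k+2) = h (k+1) + 1
    have hA : ¬ peak h (k + 2) ∧ h (k + 2) = h (k + 1) + 1 := by
      by_cases p2 : peak h (k + 2)
      · exfalso
        rw [unpop_eq, if_pos p2] at hvR
        obtain ⟨q1, q2⟩ : h (k + 1) = h (k + 2) - 1 ∧ h (k + 3) = h (k + 2) - 1 :=
          (peak_succ h (k + 1)).mp p2
        omega
      · rw [unpop_eq, if_neg p2] at hvR
        exact ⟨p2, hvR⟩
    have hB : ¬ peak h k ∧ h k = h (k + 1) + 1 := by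
      by_cases p0 : peak h k
      · exfalso
        rw [unpop_eq, if_pos p0] at hvL
        have q1 : h (k + 1) = h k - 1 := p0.2.2
        omega
      · rw [unpop_eq, if_neg p0] at hvL
        exact ⟨p0, hvL⟩
    have hk2lt : k + 2 < 2 * m := by
      by_contra H
      have := hd.2.1 (k + 2) (by omega)
      have := hd.2.2.1 (k + 1)
      omega
    -- step after k+2 must go up, else k+2 would be a peak
    have hC : h (k + 3) = h (k + 2) + 1 := by
      rcases (by exact hd.2.2.2 (k + 2) hk2lt :
          h (k + 3) - h (k + 2) = 1 ∨ h (k + 3) - h (k + 2) = -1) with e | e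
      · omega
      · exfalso
        exact hA.1 ((peak_succ h (k + 1)).mpr
          ⟨(by omega : h (k + 1) = h (k + 2) - 1), (by omega : h (k + 3) = h (k + 2) - 1)⟩)
    have hk0 : 0 < k := by
      by_contra H
      have hk : k = 0 := by omega
      subst hk
      have hvL' : unpop h 0 = h 1 + 1 := hvL
      have := hν.1
      have := hd.2.2.1 1
      omega
    obtain ⟨l, rfl⟩ : ∃ l, k = l + 1 := ⟨k - 1, by omega⟩
    have hA2 : h (l + 3) = h (l + 2) + 1 := hA.2
    have hB2 : h (l + 1) = h (l + 2) + 1 := hB.2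
    have hC2 : h (l + 4) = h (l + 3) + 1 := hC
    -- step before k must come down, else k would be a peak
    have hD : h l = h (l + 1) + 1 := by
      rcases (by exact hd.2.2.2 l (by omega) :
          h (l + 1) - h l = 1 ∨ h (l + 1) - h l = -1) with e | e
      · exfalso
        exact hB.1 ((peak_succ h l).mpr
          ⟨(by omega : h l = h (l + 1) - 1), (by omega : h (l + 2) = h (l + 1) - 1)⟩)
      · omega
    exact hff ⟨l, by omega, by omega,
      (by omega : h (l + 2) = h (l + 1) - 1),
      (by omega : h (l + 3) = h (l + 2) + 1),
      (by omega : h (l + 4) = h (l + 3) + 1)⟩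

end DyckAux

open DyckAux in
/-- A Dyck path `μ` of semilength `n+1` lies in the image of the upward pop operator
`Pop^↑ (ν) = ν ⊔ ⋁{z : ν ⋖ z}` on `J(Φ⁺_{A_n})` if and only if `μ` has no consecutive
steps `ffrr` and touches the x-axis only at `(0,0)` and `(2n+2,0)`. -/
theorem stmt_10 (n : ℕ) (μ : DyckPath (n + 1)) :
    (∃ ν : DyckPath (n + 1), IsLUB (insert ν {z | ν ⋖ z}) μ) ↔
      NoFFRR (n + 1) μ.val ∧ OnlyEndpointsOnAxis (n + 1) μ.val := by
  constructor
  · rintro ⟨ν, hl⟩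
    have hμ : μ = popPath ν := hl.unique (isLUB_pop ν)
    rw [hμ]
    exact ⟨pop_noFFRR ν.2, pop_onlyEndpoints ν.2⟩
  · rintro ⟨hff, hax⟩
    rcases Nat.eq_zero_or_pos n with rfl | hn
    · refine ⟨μ, ?_⟩
      have hpop : pop μ.val = μ.val := by
        funext j
        rw [pop_eq, if_neg ?_]
        intro hv
        have hlt := valley_lt μ.2 hv
        have hpos := hv.1
        have hj : j = 1 := by omega
        subst hj
        have e : μ.val 0 = μ.val 1 + 1 := hv.2.1
        have h0 := μ.2.1
        have h1 := μ.2.2.2.1 1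
        omega
      have h := isLUB_pop μ
      rwa [show popPath μ = μ from Subtype.ext hpop] at h
    · have hm : 2 ≤ n + 1 := by omega
      refine ⟨⟨unpop μ.val, unpop_isDyck μ.2 hax hm⟩, ?_⟩
      have h := isLUB_pop (⟨unpop μ.val, unpop_isDyck μ.2 hax hm⟩ : DyckPath (n + 1))
      rwa [show popPath ⟨unpop μ.val, unpop_isDyck μ.2 hax hm⟩ = μ from
        Subtype.ext (pop_unpop μ.2 hff hax hm)] at h
end

section
/- A symmetric Dyck path μ of semilength 2n lies in the image of the upward pop operator on J(Φ⁺_{B_n}) if and only if μ contains no four consecutive steps fall-fall-rise-rise and the only lattice points of μ on the x-axis are its endpoints (0,0) and (4n,0). -/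
/-- Dyck paths of semilength `2n` symmetric about the vertical line `x = 2n`, ordered
pointwise. This poset is isomorphic to the lattice `J(Φ⁺_{B_n})`. -/
abbrev SymDyckPath (n : ℕ) := {μ : DyckPath (2 * n) // ∀ i ≤ 4 * n, μ.val (4 * n - i) = μ.val i}

namespace Stmt11Aux

/-- Convenient repackaging of `IsDyckHeight` with the total length as parameter. -/
def Good (N : ℕ) (g : ℕ → ℤ) : Prop :=
  g 0 = 0 ∧ (∀ i, N ≤ i → g i = 0) ∧ (∀ i, 0 ≤ g i) ∧
    ∀ i < N, g (i + 1) - g i = 1 ∨ g (i + 1) - g i = -1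

lemma good_iff (n : ℕ) (h : ℕ → ℤ) : IsDyckHeight (2 * n) h ↔ Good (4 * n) h := by
  unfold IsDyckHeight Good
  have e : 2 * (2 * n) = 4 * n := by ring
  rw [e]

lemma good_parity {N : ℕ} {g : ℕ → ℤ} (hg : Good N g) :
    ∀ i, i ≤ N → (2 : ℤ) ∣ (g i + i) := by
  intro i
  induction i with
  | zero => intro _; simp [hg.1]
  | succ k ih =>
    intro hk
    have h1 := ih (by omega)
    have h2 := hg.2.2.2 k (by omega)
    push_cast
    push_cast at h1
    rcases h2 with h2 | h2 <;> omega

lemma good_gap {N : ℕ} {g z : ℕ → ℤ} (hg : Good N g) (hz : Good N z) {i : ℕ}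
    (h : g i < z i) : g i + 2 ≤ z i := by
  rcases le_or_gt i N with hi | hi
  · have p1 := good_parity hg i hi
    have p2 := good_parity hz i hi
    omega
  · have e1 := hg.2.1 i hi.le
    have e2 := hz.2.1 i hi.le
    omega

/-- `i` is an (interior) valley of `g`. -/
def Vly (N : ℕ) (g : ℕ → ℤ) (i : ℕ) : Prop :=
  0 < i ∧ i < N ∧ g (i - 1) = g i + 1 ∧ g (i + 1) = g i + 1

lemma vly_not_adjacent {N : ℕ} {g : ℕ → ℤ} {i : ℕ} (h1 : Vly N g i)
    (h2 : Vly N g (i + 1)) : False := by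
  obtain ⟨-, -, -, hb⟩ := h1
  obtain ⟨-, -, ha, -⟩ := h2
  have e : i + 1 - 1 = i := by omega
  rw [e] at ha
  omega

open Classical in
/-- The pop-up of a path: raise every valley by 2. -/
noncomputable def popF (N : ℕ) (g : ℕ → ℤ) : ℕ → ℤ :=
  fun i => if Vly N g i then g i + 2 else g i

lemma popF_pos {N : ℕ} {g : ℕ → ℤ} {i : ℕ} (h : Vly N g i) : popF N g i = g i + 2 := by
  simp [popF, h]

lemma popF_neg {N : ℕ} {g : ℕ → ℤ} {i : ℕ} (h : ¬ Vly N g i) : popF N g i = g i := by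
  simp [popF, h]

lemma popF_good {N : ℕ} {g : ℕ → ℤ} (hg : Good N g) : Good N (popF N g) := by
  obtain ⟨h0, hz, hnn, hstep⟩ := hg
  refine ⟨?_, ?_, ?_, ?_⟩
  · have hv : ¬ Vly N g 0 := fun h => by exact absurd h.1 (by omega)
    rw [popF_neg hv, h0]
  · intro i hi
    have hv : ¬ Vly N g i := fun h => by have := h.2.1; omega
    rw [popF_neg hv]; exact hz i hi
  · intro i
    by_cases hv : Vly N g i
    · rw [popF_pos hv]; have := hnn i; omega
    · rw [popF_neg hv]; exact hnn i
  · intro i hi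
    by_cases v1 : Vly N g i <;> by_cases v2 : Vly N g (i + 1)
    · exact absurd v2 (fun h => vly_not_adjacent v1 h)
    · rw [popF_pos v1, popF_neg v2]
      have := v1.2.2.2
      omega
    · rw [popF_neg v1, popF_pos v2]
      have ha := v2.2.2.1
      have e : i + 1 - 1 = i := by omega
      rw [e] at ha
      omega
    · rw [popF_neg v1, popF_neg v2]
      exact hstep i hi

lemma vly_sym_of {N : ℕ} {g : ℕ → ℤ} (hsym : ∀ i ≤ N, g (N - i) = g i) {i : ℕ}
    (h : Vly N g i) : Vly N g (N - i) := by
  obtain ⟨h0, hN, ha, hb⟩ := h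
  refine ⟨by omega, by omega, ?_, ?_⟩
  · have e : N - i - 1 = N - (i + 1) := by omega
    rw [e, hsym (i + 1) (by omega), hb, hsym i (by omega)]
  · have e : N - i + 1 = N - (i - 1) := by omega
    rw [e, hsym (i - 1) (by omega), ha, hsym i (by omega)]

lemma vly_sym_iff {N : ℕ} {g : ℕ → ℤ} (hsym : ∀ i ≤ N, g (N - i) = g i) {i : ℕ}
    (hi : i ≤ N) : Vly N g (N - i) ↔ Vly N g i := by
  constructor
  · intro h
    have h2 := vly_sym_of hsym h
    have e : N - (N - i) = i := by omega
    rwa [e] at h2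
  · exact vly_sym_of hsym

lemma popF_sym {N : ℕ} {g : ℕ → ℤ} (hsym : ∀ i ≤ N, g (N - i) = g i) :
    ∀ i ≤ N, popF N g (N - i) = popF N g i := by
  intro i hi
  by_cases h : Vly N g i
  · rw [popF_pos ((vly_sym_iff hsym hi).2 h), popF_pos h, hsym i hi]
  · rw [popF_neg (fun hh => h ((vly_sym_iff hsym hi).1 hh)), popF_neg h, hsym i hi]

/-- Flip a symmetric pair of valleys `{i, N-i}`. -/
def flipF (N : ℕ) (g : ℕ → ℤ) (i : ℕ) : ℕ → ℤ :=
  fun j => if j = i ∨ j = N - i then g j + 2 else g j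

lemma flipF_pos {N : ℕ} {g : ℕ → ℤ} {i j : ℕ} (h : j = i ∨ j = N - i) :
    flipF N g i j = g j + 2 := by
  simp only [flipF]
  rw [if_pos h]

lemma flipF_neg {N : ℕ} {g : ℕ → ℤ} {i j : ℕ} (h : ¬ (j = i ∨ j = N - i)) :
    flipF N g i j = g j := by
  simp only [flipF]
  rw [if_neg h]

lemma flipF_good {N : ℕ} {g : ℕ → ℤ} (hg : Good N g)
    (hsym : ∀ i ≤ N, g (N - i) = g i) (hE : N % 2 = 0) {i : ℕ} (hv : Vly N g i) :
    Good N (flipF N g i) := by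
  have hi0 := hv.1
  have hiN := hv.2.1
  have hv' := vly_sym_of hsym hv
  obtain ⟨h0, hz, hnn, hstep⟩ := hg
  refine ⟨?_, ?_, ?_, ?_⟩
  · rw [flipF_neg (by omega), h0]
  · intro j hj
    rw [flipF_neg (by omega)]
    exact hz j hj
  · intro j
    by_cases hm : j = i ∨ j = N - i
    · rw [flipF_pos hm]; have := hnn j; omega
    · rw [flipF_neg hm]; exact hnn j
  · intro j hj
    by_cases m1 : j = i ∨ j = N - i <;> by_cases m2 : j + 1 = i ∨ j + 1 = N - i
    · exfalso; omega
    · rw [flipF_pos m1, flipF_neg m2]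
      rcases m1 with rfl | rfl
      · have := hv.2.2.2; omega
      · have := hv'.2.2.2; omega
    · rw [flipF_neg m1, flipF_pos m2]
      rcases m2 with hm | hm
      · have ha := hv.2.2.1
        have e : i - 1 = j := by omega
        rw [e] at ha
        rw [← hm] at ha
        omega
      · have ha := hv'.2.2.1
        have e : N - i - 1 = j := by omega
        rw [e] at ha
        rw [← hm] at ha
        omega
    · rw [flipF_neg m1, flipF_neg m2]
      exact hstep j hj

lemma flipF_sym {N : ℕ} {g : ℕ → ℤ} (hsym : ∀ i ≤ N, g (N - i) = g i) {i : ℕ}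
    (hi0 : 0 < i) (hiN : i < N) :
    ∀ j ≤ N, flipF N g i (N - j) = flipF N g i j := by
  intro j hj
  by_cases h : j = i ∨ j = N - i
  · rw [flipF_pos (by omega), flipF_pos h, hsym j hj]
  · rw [flipF_neg (by omega), flipF_neg h, hsym j hj]

lemma flipF_le_popF {N : ℕ} {g : ℕ → ℤ} (hsym : ∀ i ≤ N, g (N - i) = g i) {i : ℕ}
    (hv : Vly N g i) : ∀ j, flipF N g i j ≤ popF N g j := by
  intro j
  by_cases h : j = i ∨ j = N - i
  · rw [flipF_pos h]
    rcases h with rfl | rfl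
    · rw [popF_pos hv]
    · rw [popF_pos (vly_sym_of hsym hv)]
  · rw [flipF_neg h]
    by_cases h2 : Vly N g j
    · rw [popF_pos h2]; omega
    · rw [popF_neg h2]

section Sym

variable {n : ℕ}

lemma good_of (ν : SymDyckPath n) : Good (4 * n) ν.1.1 :=
  (good_iff n ν.1.1).1 ν.1.2

lemma symext {a b : SymDyckPath n} (h : ∀ j, a.1.1 j = b.1.1 j) : a = b :=
  Subtype.ext (Subtype.ext (funext h))

lemma le_def {a b : SymDyckPath n} : a ≤ b ↔ ∀ i, a.1.1 i ≤ b.1.1 i := Iff.rfl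

/-- The bundled pop path. -/
noncomputable def popPath (ν : SymDyckPath n) : SymDyckPath n :=
  ⟨⟨popF (4 * n) ν.1.1, (good_iff n _).2 (popF_good (good_of ν))⟩, popF_sym ν.2⟩

lemma popPath_val (ν : SymDyckPath n) (j : ℕ) :
    (popPath ν).1.1 j = popF (4 * n) ν.1.1 j := rfl

/-- The bundled flip path at a symmetric valley pair. -/
noncomputable def flipPath (ν : SymDyckPath n) (i : ℕ) (hv : Vly (4 * n) ν.1.1 i) :
    SymDyckPath n :=
  ⟨⟨flipF (4 * n) ν.1.1 i, (good_iff n _).2 (flipF_good (good_of ν) ν.2 (by omega) hv)⟩,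
    flipF_sym ν.2 hv.1 hv.2.1⟩

lemma flipPath_val (ν : SymDyckPath n) (i : ℕ) (hv : Vly (4 * n) ν.1.1 i) (j : ℕ) :
    (flipPath ν i hv).1.1 j = flipF (4 * n) ν.1.1 i j := rfl

lemma lt_flipPath (ν : SymDyckPath n) (i : ℕ) (hv : Vly (4 * n) ν.1.1 i) :
    ν < flipPath ν i hv := by
  refine lt_of_le_of_ne ?_ ?_
  · rw [le_def]
    intro j
    rw [flipPath_val]
    by_cases h : j = i ∨ j = 4 * n - i
    · rw [flipF_pos h]; omega
    · rw [flipF_neg h]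
  · intro h
    have h2 : ν.1.1 i = (flipPath ν i hv).1.1 i := congrArg (fun x => x.1.1 i) h
    rw [flipPath_val, flipF_pos (Or.inl rfl)] at h2
    omega

lemma flipPath_covBy (ν : SymDyckPath n) (i : ℕ) (hv : Vly (4 * n) ν.1.1 i) :
    ν ⋖ flipPath ν i hv := by
  refine ⟨lt_flipPath ν i hv, ?_⟩
  intro c hc1 hc2
  have hle1 : ∀ j, ν.1.1 j ≤ c.1.1 j := le_def.1 hc1.le
  have hle2 : ∀ j, c.1.1 j ≤ (flipPath ν i hv).1.1 j := le_def.1 hc2.le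
  have hout : ∀ j, ¬(j = i ∨ j = 4 * n - i) → c.1.1 j = ν.1.1 j := by
    intro j hj
    have h1 := hle2 j
    rw [flipPath_val, flipF_neg hj] at h1
    have h2 := hle1 j
    omega
  have hci : c.1.1 i = ν.1.1 i ∨ c.1.1 i = ν.1.1 i + 2 := by
    rcases eq_or_lt_of_le (hle1 i) with h | h
    · exact Or.inl h.symm
    · have h2 := good_gap (good_of ν) (good_of c) h
      have h3 := hle2 i
      rw [flipPath_val, flipF_pos (Or.inl rfl)] at h3
      omega
  have hiN2 : i < 4 * n := hv.2.1
  have hcsym : c.1.1 (4 * n - i) = c.1.1 i := c.2 i (by omega)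
  have hνsym : ν.1.1 (4 * n - i) = ν.1.1 i := ν.2 i (by omega)
  rcases hci with h | h
  · apply hc1.ne
    apply symext
    intro j
    by_cases hj : j = i ∨ j = 4 * n - i
    · rcases hj with rfl | rfl
      · omega
      · omega
    · exact (hout j hj).symm
  · apply hc2.ne
    apply symext
    intro j
    rw [flipPath_val]
    by_cases hj : j = i ∨ j = 4 * n - i
    · rw [flipF_pos hj]
      rcases hj with rfl | rfl
      · omega
      · omega
    · rw [flipF_neg hj]
      exact hout j hj

lemma exists_flip_le {ν z : SymDyckPath n} (h : ν < z) :
    ∃ i, ∃ hv : Vly (4 * n) ν.1.1 i, flipPath ν i hv ≤ z := by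
  classical
  have hgood := good_of ν
  have hzgood := good_of z
  have hle : ∀ j, ν.1.1 j ≤ z.1.1 j := le_def.1 h.le
  have hne : ∃ j, ν.1.1 j < z.1.1 j := by
    by_contra hc
    push_neg at hc
    exact h.ne (symext fun j => le_antisymm (hle j) (hc j))
  set T : Finset ℕ := (Finset.range (4 * n)).filter (fun j => ν.1.1 j < z.1.1 j) with hT
  have hTne : T.Nonempty := by
    obtain ⟨j, hj⟩ := hne
    refine ⟨j, ?_⟩
    rw [hT, Finset.mem_filter, Finset.mem_range]
    refine ⟨?_, hj⟩
    by_contra hjN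
    push_neg at hjN
    have e1 := hgood.2.1 j hjN
    have e2 := hzgood.2.1 j hjN
    omega
  obtain ⟨i, hiT, hmin⟩ := T.exists_min_image ν.1.1 hTne
  rw [hT, Finset.mem_filter, Finset.mem_range] at hiT
  obtain ⟨hiN, hilt⟩ := hiT
  have hi0 : 0 < i := by
    rcases Nat.eq_zero_or_pos i with rfl | h'
    · have e1 := hgood.1
      have e2 := hzgood.1
      omega
    · exact h'
  have hzi : ν.1.1 i + 2 ≤ z.1.1 i := good_gap hgood hzgood hilt
  have hmin' : ∀ j, j < 4 * n → ν.1.1 j < z.1.1 j → ν.1.1 i ≤ ν.1.1 j := by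
    intro j h1 h2
    exact hmin j (by rw [hT, Finset.mem_filter, Finset.mem_range]; exact ⟨h1, h2⟩)
  have ha : ν.1.1 (i - 1) = ν.1.1 i + 1 := by
    have hstep := hgood.2.2.2 (i - 1) (by omega)
    have hstepz := hzgood.2.2.2 (i - 1) (by omega)
    have e : i - 1 + 1 = i := by omega
    rw [e] at hstep hstepz
    rcases hstep with h' | h'
    · exfalso
      have hlt2 : ν.1.1 (i - 1) < z.1.1 (i - 1) := by
        have := hle (i - 1); omega
      have := hmin' (i - 1) (by omega) hlt2
      omega
    · omega
  have hb : ν.1.1 (i + 1) = ν.1.1 i + 1 := by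
    have hstep := hgood.2.2.2 i (by omega)
    have hstepz := hzgood.2.2.2 i (by omega)
    rcases hstep with h' | h'
    · omega
    · exfalso
      have hnn := hgood.2.2.1 (i + 1)
      have hlt2 : ν.1.1 (i + 1) < z.1.1 (i + 1) := by omega
      have hi1N : i + 1 < 4 * n := by
        by_contra hc
        push_neg at hc
        have := hzgood.2.1 (i + 1) hc
        omega
      have := hmin' (i + 1) hi1N hlt2
      omega
  have hv : Vly (4 * n) ν.1.1 i := ⟨hi0, hiN, ha, hb⟩
  refine ⟨i, hv, ?_⟩
  rw [le_def]
  intro j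
  rw [flipPath_val]
  by_cases hj : j = i ∨ j = 4 * n - i
  · rw [flipF_pos hj]
    rcases hj with rfl | rfl
    · exact hzi
    · have h1 := z.2 i (by omega)
      have h2 := ν.2 i (by omega)
      omega
  · rw [flipF_neg hj]
    exact hle j

lemma le_pop_of_covBy {ν z : SymDyckPath n} (hcov : ν ⋖ z) : z ≤ popPath ν := by
  obtain ⟨i, hv, hle⟩ := exists_flip_le hcov.1
  have heq : flipPath ν i hv = z := by
    by_contra hne
    exact hcov.2 (lt_flipPath ν i hv) (lt_of_le_of_ne hle hne)
  rw [← heq, le_def]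
  intro j
  rw [flipPath_val, popPath_val]
  exact flipF_le_popF ν.2 hv j

lemma pop_isLUB (ν : SymDyckPath n) :
    IsLUB (insert ν {z | ν ⋖ z}) (popPath ν) := by
  constructor
  · intro w hw
    rcases Set.mem_insert_iff.1 hw with rfl | hw
    · rw [le_def]
      intro j
      rw [popPath_val]
      by_cases hj : Vly (4 * n) w.1.1 j
      · rw [popF_pos hj]; omega
      · rw [popF_neg hj]
    · exact le_pop_of_covBy hw
  · intro w hw
    have hν : ν ≤ w := hw (Set.mem_insert _ _)
    rw [le_def]
    intro j
    rw [popPath_val]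
    by_cases hj : Vly (4 * n) ν.1.1 j
    · rw [popF_pos hj]
      have hcov : flipPath ν j hj ∈ insert ν {z | ν ⋖ z} :=
        Set.mem_insert_iff.2 (Or.inr (flipPath_covBy ν j hj))
      have h1 := le_def.1 (hw hcov) j
      rw [flipPath_val, flipF_pos (Or.inl rfl)] at h1
      exact h1
    · rw [popF_neg hj]
      exact le_def.1 hν j

/-- `i` is an (interior) peak of `f`. -/
def Pk (N : ℕ) (f : ℕ → ℤ) (i : ℕ) : Prop :=
  0 < i ∧ i < N ∧ f (i - 1) = f i - 1 ∧ f (i + 1) = f i - 1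

lemma pk_not_adjacent {N : ℕ} {f : ℕ → ℤ} {i : ℕ} (h1 : Pk N f i)
    (h2 : Pk N f (i + 1)) : False := by
  obtain ⟨-, -, -, hb⟩ := h1
  obtain ⟨-, -, ha, -⟩ := h2
  have e : i + 1 - 1 = i := by omega
  rw [e] at ha
  omega

lemma pk_sym_of {N : ℕ} {f : ℕ → ℤ} (hsym : ∀ i ≤ N, f (N - i) = f i) {i : ℕ}
    (h : Pk N f i) : Pk N f (N - i) := by
  obtain ⟨h0, hN, ha, hb⟩ := h
  refine ⟨by omega, by omega, ?_, ?_⟩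
  · have e : N - i - 1 = N - (i + 1) := by omega
    rw [e, hsym (i + 1) (by omega), hb, hsym i (by omega)]
  · have e : N - i + 1 = N - (i - 1) := by omega
    rw [e, hsym (i - 1) (by omega), ha, hsym i (by omega)]

lemma pk_sym_iff {N : ℕ} {f : ℕ → ℤ} (hsym : ∀ i ≤ N, f (N - i) = f i) {i : ℕ}
    (hi : i ≤ N) : Pk N f (N - i) ↔ Pk N f i := by
  constructor
  · intro h
    have h2 := pk_sym_of hsym h
    have e : N - (N - i) = i := by omega
    rwa [e] at h2
  · exact pk_sym_of hsym

lemma pk_high {N : ℕ} {f : ℕ → ℤ} (hf : Good N f) (hN2 : N ≠ 2)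
    (honly : ∀ i, 0 < i → i < N → 0 < f i) {i : ℕ} (hp : Pk N f i) :
    2 ≤ f i := by
  obtain ⟨h0, hN, ha, hb⟩ := hp
  by_contra hc
  push_neg at hc
  have h1 : 0 < f i := honly i h0 hN
  have hfi : f i = 1 := by omega
  rcases Nat.lt_or_ge 1 i with h' | h'
  · have := honly (i - 1) (by omega) (by omega)
    omega
  · have hi1 : i = 1 := by omega
    subst hi1
    have h2N : 2 < N := by omega
    have h2 := honly 2 (by omega) h2N
    have e2 : (2 : ℕ) = 1 + 1 := by norm_num
    rw [e2] at h2
    omega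

open Classical in
/-- Lower every peak by 2. -/
noncomputable def lowF (N : ℕ) (f : ℕ → ℤ) : ℕ → ℤ :=
  fun j => if Pk N f j then f j - 2 else f j

lemma lowF_pos {N : ℕ} {f : ℕ → ℤ} {j : ℕ} (h : Pk N f j) : lowF N f j = f j - 2 := by
  simp [lowF, h]

lemma lowF_neg {N : ℕ} {f : ℕ → ℤ} {j : ℕ} (h : ¬ Pk N f j) : lowF N f j = f j := by
  simp [lowF, h]

lemma lowF_good {N : ℕ} {f : ℕ → ℤ} (hf : Good N f) (hN2 : N ≠ 2)
    (honly : ∀ i, 0 < i → i < N → 0 < f i) : Good N (lowF N f) := by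
  obtain ⟨h0, hz, hnn, hstep⟩ := hf
  refine ⟨?_, ?_, ?_, ?_⟩
  · rw [lowF_neg (fun h => by exact absurd h.1 (by omega)), h0]
  · intro i hi
    rw [lowF_neg (fun h => by have := h.2.1; omega)]
    exact hz i hi
  · intro i
    by_cases hp : Pk N f i
    · rw [lowF_pos hp]
      have := pk_high ⟨h0, hz, hnn, hstep⟩ hN2 honly hp
      omega
    · rw [lowF_neg hp]
      exact hnn i
  · intro i hi
    by_cases p1 : Pk N f i <;> by_cases p2 : Pk N f (i + 1)
    · exact absurd p2 (fun h => pk_not_adjacent p1 h)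
    · rw [lowF_pos p1, lowF_neg p2]
      have := p1.2.2.2
      omega
    · rw [lowF_neg p1, lowF_pos p2]
      have ha := p2.2.2.1
      have e : i + 1 - 1 = i := by omega
      rw [e] at ha
      omega
    · rw [lowF_neg p1, lowF_neg p2]
      exact hstep i hi

lemma lowF_sym {N : ℕ} {f : ℕ → ℤ} (hsym : ∀ i ≤ N, f (N - i) = f i) :
    ∀ i ≤ N, lowF N f (N - i) = lowF N f i := by
  intro i hi
  by_cases h : Pk N f i
  · rw [lowF_pos ((pk_sym_iff hsym hi).2 h), lowF_pos h, hsym i hi]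
  · rw [lowF_neg (fun hh => h ((pk_sym_iff hsym hi).1 hh)), lowF_neg h, hsym i hi]

/-- Valleys of the lowered path are exactly the peaks of `f`. -/
lemma vly_lowF_iff {N : ℕ} {f : ℕ → ℤ} (hf : Good N f)
    (hno : ¬ ∃ i, i + 4 ≤ N ∧ f (i + 1) = f i - 1 ∧ f (i + 2) = f (i + 1) - 1 ∧
      f (i + 3) = f (i + 2) + 1 ∧ f (i + 4) = f (i + 3) + 1)
    {i : ℕ} : Vly N (lowF N f) i ↔ Pk N f i := by
  obtain ⟨h0, hz, hnn, hstep⟩ := hf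
  constructor
  · rintro ⟨hi0, hiN, ha, hb⟩
    by_contra hp
    rw [lowF_neg hp] at ha hb
    by_cases p1 : Pk N f (i - 1)
    · rw [lowF_pos p1] at ha
      have hstep1 := hstep (i - 1) (by omega)
      have e : i - 1 + 1 = i := by omega
      rw [e] at hstep1
      omega
    · rw [lowF_neg p1] at ha
      by_cases p2 : Pk N f (i + 1)
      · rw [lowF_pos p2] at hb
        have hstep2 := hstep i (by omega)
        omega
      · rw [lowF_neg p2] at hb
        -- now `i` is a valley of `f`
        have hi2 : 2 ≤ i := by
          by_contra hc
          have hi1 : i = 1 := by omega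
          subst hi1
          have := hnn 1
          have e : (1 : ℕ) - 1 = 0 := by omega
          rw [e] at ha
          omega
        have hi2N : i + 2 ≤ N := by
          by_contra hc
          have hiN' : i + 1 = N := by omega
          have e1 := hz (i + 1) (by omega)
          have e2 := hnn i
          omega
        have hm2 : f (i - 2) = f i ∨ f (i - 2) = f i + 2 := by
          have hstep3 := hstep (i - 2) (by omega)
          have e : i - 2 + 1 = i - 1 := by omega
          rw [e] at hstep3
          omega
        have hp2 : f (i + 2) = f i ∨ f (i + 2) = f i + 2 := by
          have hstep4 := hstep (i + 1) (by omega)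
          have e : i + 1 + 1 = i + 2 := by omega
          rw [e] at hstep4
          omega
        rcases hm2 with hm2 | hm2
        · apply p1
          refine ⟨by omega, by omega, ?_, ?_⟩
          · have e : i - 1 - 1 = i - 2 := by omega
            rw [e]
            omega
          · have e : i - 1 + 1 = i := by omega
            rw [e]
            omega
        · rcases hp2 with hp2 | hp2
          · apply p2
            refine ⟨by omega, by omega, ?_, ?_⟩
            · have e : i + 1 - 1 = i := by omega
              rw [e]
              omega
            · have e : i + 1 + 1 = i + 2 := by omega
              rw [e]
              omega
          · apply hno
            have e1 : i - 2 + 1 = i - 1 := by omega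
            have e2 : i - 2 + 2 = i := by omega
            have e3 : i - 2 + 3 = i + 1 := by omega
            have e4 : i - 2 + 4 = i + 2 := by omega
            refine ⟨i - 2, by omega, ?_, ?_, ?_, ?_⟩
            · rw [e1]; omega
            · rw [e2, e1]; omega
            · rw [e3, e2]; omega
            · rw [e4, e3]; omega
  · rintro hp
    obtain ⟨hi0, hiN, ha, hb⟩ := hp
    have hp' : Pk N f i := ⟨hi0, hiN, ha, hb⟩
    have np1 : ¬ Pk N f (i - 1) := by
      intro h
      apply pk_not_adjacent h
      have e : i - 1 + 1 = i := by omega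
      rw [e]
      exact hp'
    have np2 : ¬ Pk N f (i + 1) := fun h => pk_not_adjacent hp' h
    refine ⟨hi0, hiN, ?_, ?_⟩
    · rw [lowF_neg np1, lowF_pos hp']
      omega
    · rw [lowF_neg np2, lowF_pos hp']
      omega

end Sym

end Stmt11Aux

open Stmt11Aux in
/-- A symmetric Dyck path `μ` of semilength `2n` lies in the image of the upward pop
operator `Pop^↑ (ν) = ν ⊔ ⋁{z : ν ⋖ z}` on `J(Φ⁺_{B_n})` if and only if `μ` has no
consecutive steps `ffrr` and touches the x-axis only at `(0,0)` and `(4n,0)`. -/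
theorem stmt_11 (n : ℕ) (μ : SymDyckPath n) :
    (∃ ν : SymDyckPath n, IsLUB (insert ν {z | ν ⋖ z}) μ) ↔
      NoFFRR (2 * n) μ.val.val ∧ OnlyEndpointsOnAxis (2 * n) μ.val.val := by
  have hfgood : Good (4 * n) μ.val.val := good_of μ
  constructor
  · rintro ⟨ν, hlub⟩
    have hggood : Good (4 * n) ν.val.val := good_of ν
    have hμpop : μ = popPath ν := hlub.unique (pop_isLUB ν)
    have hfval : ∀ j, μ.val.val j = popF (4 * n) ν.val.val j := by
      intro j
      rw [hμpop]
      rfl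
    have hOr : ∀ j, μ.val.val j = ν.val.val j + 2 ∨ μ.val.val j = ν.val.val j := by
      intro j
      by_cases h : Vly (4 * n) ν.val.val j
      · rw [hfval j, popF_pos h]; exact Or.inl rfl
      · rw [hfval j, popF_neg h]; exact Or.inr rfl
    have hV : ∀ j, μ.val.val j = ν.val.val j + 2 → Vly (4 * n) ν.val.val j := by
      intro j hj
      by_contra hv
      rw [hfval j, popF_neg hv] at hj
      omega
    have hVval : ∀ j, Vly (4 * n) ν.val.val j → μ.val.val j = ν.val.val j + 2 := by
      intro j hj
      rw [hfval j, popF_pos hj]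
    constructor
    · intro hcon
      obtain ⟨i, hi4, e1, e2, e3, e4⟩ := hcon
      have hi4' : i + 4 ≤ 4 * n := by omega
      by_cases v2 : Vly (4 * n) ν.val.val (i + 2)
      · have hf2 := hVval _ v2
        obtain ⟨-, -, a2, b2⟩ := v2
        have ea : i + 2 - 1 = i + 1 := by omega
        rw [ea] at a2
        have hf1 : μ.val.val (i + 1) = ν.val.val (i + 1) + 2 := by omega
        have hv1 := hV _ hf1
        have hb1 := hv1.2.2.2
        have e2 : i + 1 + 1 = i + 2 := by omega
        rw [e2] at hb1
        omega
      · have hf2 : μ.val.val (i + 2) = ν.val.val (i + 2) := by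
          rcases hOr (i + 2) with h | h
          · exact absurd (hV _ h) v2
          · exact h
        by_cases v1 : Vly (4 * n) ν.val.val (i + 1)
        · have hf1 := hVval _ v1
          obtain ⟨-, -, a1, b1⟩ := v1
          have ea : i + 1 - 1 = i := by omega
          rw [ea] at a1
          have hf0 : μ.val.val i = ν.val.val i + 2 := by omega
          have hv0 := hV _ hf0
          have := hv0.2.2.2
          omega
        · have hf1 : μ.val.val (i + 1) = ν.val.val (i + 1) := by
            rcases hOr (i + 1) with h | h
            · exact absurd (hV _ h) v1
            · exact h
          by_cases v3 : Vly (4 * n) ν.val.val (i + 3)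
          · have hf3 := hVval _ v3
            obtain ⟨-, -, a3, b3⟩ := v3
            have ea : i + 3 - 1 = i + 2 := by omega
            rw [ea] at a3
            have ec : i + 3 + 1 = i + 4 := by omega
            rw [ec] at b3
            have hf4 : μ.val.val (i + 4) = ν.val.val (i + 4) + 2 := by omega
            have hv4 := hV _ hf4
            have ha4 := hv4.2.2.1
            have eb : i + 4 - 1 = i + 3 := by omega
            rw [eb] at ha4
            omega
          · have hf3 : μ.val.val (i + 3) = ν.val.val (i + 3) := by
              rcases hOr (i + 3) with h | h
              · exact absurd (hV _ h) v3
              · exact h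
            apply v2
            refine ⟨by omega, by omega, ?_, ?_⟩
            · have ea : i + 2 - 1 = i + 1 := by omega
              rw [ea]
              omega
            · have ea : i + 2 + 1 = i + 3 := by omega
              rw [ea]
              omega
    · intro i hi0 hiN
      have hiN' : i < 4 * n := by omega
      by_contra hc
      push_neg at hc
      have hnn := hfgood.2.2.1 i
      have hfi : μ.val.val i = 0 := by omega
      have hgnn := hggood.2.2.1 i
      have hgi : ν.val.val i = 0 := by
        rcases hOr i with h | h <;> omega
      have hnv : ¬ Vly (4 * n) ν.val.val i := by
        intro hv
        have := hVval i hv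
        omega
      apply hnv
      have hstep1 := hggood.2.2.2 (i - 1) (by omega)
      have e : i - 1 + 1 = i := by omega
      rw [e] at hstep1
      have hstep2 := hggood.2.2.2 i (by omega)
      have hn1 := hggood.2.2.1 (i - 1)
      have hn2 := hggood.2.2.1 (i + 1)
      exact ⟨hi0, hiN', by omega, by omega⟩
  · rintro ⟨hno, honly⟩
    have hno' : ¬ ∃ i, i + 4 ≤ 4 * n ∧ μ.val.val (i + 1) = μ.val.val i - 1 ∧
        μ.val.val (i + 2) = μ.val.val (i + 1) - 1 ∧
        μ.val.val (i + 3) = μ.val.val (i + 2) + 1 ∧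
        μ.val.val (i + 4) = μ.val.val (i + 3) + 1 := by
      intro hcon
      obtain ⟨i, h1, h2, h3, h4, h5⟩ := hcon
      exact hno ⟨i, by omega, h2, h3, h4, h5⟩
    have honly' : ∀ i, 0 < i → i < 4 * n → 0 < μ.val.val i := by
      intro i h1 h2
      exact honly i h1 (by omega)
    have hN2 : (4 : ℕ) * n ≠ 2 := by omega
    refine ⟨⟨⟨lowF (4 * n) μ.val.val,
      (good_iff n _).2 (lowF_good hfgood hN2 honly')⟩, lowF_sym μ.2⟩, ?_⟩
    set ν : SymDyckPath n := ⟨⟨lowF (4 * n) μ.val.val,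
      (good_iff n _).2 (lowF_good hfgood hN2 honly')⟩, lowF_sym μ.2⟩ with hν
    have hpop : μ = popPath ν := by
      apply symext
      intro j
      rw [popPath_val]
      have hνval : ν.1.1 = lowF (4 * n) μ.val.val := rfl
      by_cases hp : Pk (4 * n) μ.val.val j
      · rw [hνval, popF_pos ((vly_lowF_iff hfgood hno').2 hp), lowF_pos hp]
        omega
      · rw [hνval, popF_neg (fun h => hp ((vly_lowF_iff hfgood hno').1 h)), lowF_neg hp]
    rw [hpop]
    exact pop_isLUB ν
end

section
/- The formal power series ((xy+1)² + 4xy/(x−1))^(−1/2), expanded via the generalized binomial theorem, has coefficient of x^n y^k equal to ∑_{j=0}^{k} binomial(2j, j)·binomial(k+j, k−j)·binomial(n−k+j−1, n−k)·(−1)^(k−j). -/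
open MvPowerSeries Finset

noncomputable section StmtAux

abbrev Q2 := MvPowerSeries (Fin 2) ℚ

def ee (n k : ℕ) : Fin 2 →₀ ℕ := Finsupp.single 0 n + Finsupp.single 1 k

lemma ee_apply0 (n k : ℕ) : ee n k 0 = n := by
  simp [ee, Finsupp.single_apply]

lemma ee_apply1 (n k : ℕ) : ee n k 1 = k := by
  simp [ee, Finsupp.single_apply]

lemma ee_eq (d : Fin 2 →₀ ℕ) : d = ee (d 0) (d 1) := by
  ext i; fin_cases i
  · simp [ee_apply0]
  · simp [ee_apply1]

lemma ee_add (a c b d : ℕ) : ee a c + ee b d = ee (a + b) (c + d) := by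
  ext i; fin_cases i
  · simp [Finsupp.add_apply, ee_apply0]
  · simp [Finsupp.add_apply, ee_apply1]

lemma ee_le (a c b d : ℕ) : ee a c ≤ ee b d ↔ a ≤ b ∧ c ≤ d := by
  rw [Finsupp.le_def]
  constructor
  · intro h
    exact ⟨by simpa [ee_apply0] using h 0, by simpa [ee_apply1] using h 1⟩
  · rintro ⟨h1, h2⟩ i
    fin_cases i
    · simpa [ee_apply0] using h1
    · simpa [ee_apply1] using h2

lemma ee_sub (a c b d : ℕ) : ee a c - ee b d = ee (a - b) (c - d) := by
  ext i; fin_cases i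
  · simp [Finsupp.tsub_apply, ee_apply0]
  · simp [Finsupp.tsub_apply, ee_apply1]

lemma coeff_mul_ee (f g : Q2) (n k : ℕ) :
    MvPowerSeries.coeff (ee n k) (f * g) =
      ∑ i ∈ range (n + 1), ∑ j ∈ range (k + 1),
        MvPowerSeries.coeff (ee i j) f * MvPowerSeries.coeff (ee (n - i) (k - j)) g := by
  rw [MvPowerSeries.coeff_mul, ← Finset.sum_product']
  refine Finset.sum_nbij' (fun p => (p.1 0, p.1 1))
    (fun q => (ee q.1 q.2, ee (n - q.1) (k - q.2))) ?_ ?_ ?_ ?_ ?_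
  · intro p hp
    rw [Finset.HasAntidiagonal.mem_antidiagonal] at hp
    have h0 : p.1 0 + p.2 0 = n := by
      have := congrArg (fun x => x 0) hp
      simpa [Finsupp.add_apply, ee_apply0] using this
    have h1 : p.1 1 + p.2 1 = k := by
      have := congrArg (fun x => x 1) hp
      simpa [Finsupp.add_apply, ee_apply1] using this
    simp only [Finset.mem_product, Finset.mem_range]
    omega
  · intro q hq
    simp only [Finset.mem_product, Finset.mem_range] at hq
    rw [Finset.HasAntidiagonal.mem_antidiagonal, ee_add]
    congr 1 <;> omega
  · intro p hp
    rw [Finset.HasAntidiagonal.mem_antidiagonal] at hp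
    have h0 : p.1 0 + p.2 0 = n := by
      have := congrArg (fun x => x 0) hp
      simpa [Finsupp.add_apply, ee_apply0] using this
    have h1 : p.1 1 + p.2 1 = k := by
      have := congrArg (fun x => x 1) hp
      simpa [Finsupp.add_apply, ee_apply1] using this
    have e1 : ee (p.1 0) (p.1 1) = p.1 := (ee_eq p.1).symm
    have e2 : ee (n - p.1 0) (k - p.1 1) = p.2 := by
      rw [ee_eq p.2]; congr 1 <;> omega
    simp [e1, e2]
  · intro q hq
    simp only [Finset.mem_product, Finset.mem_range] at hq
    simp [ee_apply0, ee_apply1]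
  · intro p hp
    rw [Finset.HasAntidiagonal.mem_antidiagonal] at hp
    have h0 : p.1 0 + p.2 0 = n := by
      have := congrArg (fun x => x 0) hp
      simpa [Finsupp.add_apply, ee_apply0] using this
    have h1 : p.1 1 + p.2 1 = k := by
      have := congrArg (fun x => x 1) hp
      simpa [Finsupp.add_apply, ee_apply1] using this
    have e1 : ee (p.1 0) (p.1 1) = p.1 := (ee_eq p.1).symm
    have e2 : ee (n - p.1 0) (k - p.1 1) = p.2 := by
      rw [ee_eq p.2]; congr 1 <;> omega
    simp [e1, e2]

def Mon (m : ℕ) : Q2 := MvPowerSeries.monomial (ee m m) 1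
def Wi : Q2 := fun d => if d 0 = d 1 then (-1 : ℚ) ^ (d 0) else 0
def Gg : Q2 := fun d => if d 1 = 0 then (1 : ℚ) else 0

lemma coeff_Wi (n k : ℕ) :
    MvPowerSeries.coeff (ee n k) Wi = if n = k then (-1 : ℚ) ^ n else 0 := by
  rw [MvPowerSeries.coeff_apply]
  simp [Wi, ee_apply0, ee_apply1]

lemma coeff_Gg (n k : ℕ) :
    MvPowerSeries.coeff (ee n k) Gg = if k = 0 then 1 else 0 := by
  rw [MvPowerSeries.coeff_apply]
  simp [Gg, ee_apply0, ee_apply1]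

lemma ee_zero : ee 0 0 = 0 := by
  simp [ee]

lemma ee_eq_zero_iff (n k : ℕ) : ee n k = (0 : Fin 2 →₀ ℕ) ↔ n = 0 ∧ k = 0 := by
  constructor
  · intro h
    refine ⟨?_, ?_⟩
    · have := congrArg (fun x => x 0) h; simpa [ee_apply0] using this
    · have := congrArg (fun x => x 1) h; simpa [ee_apply1] using this
  · rintro ⟨rfl, rfl⟩; exact ee_zero

lemma coeff_one_ee (n k : ℕ) :
    MvPowerSeries.coeff (ee n k) (1 : Q2) = if n = 0 ∧ k = 0 then 1 else 0 := by
  rw [MvPowerSeries.coeff_one]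
  simp [ee_eq_zero_iff]

lemma Mon_mul_Mon (a b : ℕ) : Mon a * Mon b = Mon (a + b) := by
  rw [Mon, Mon, Mon, MvPowerSeries.monomial_mul_monomial, ee_add, one_mul]

lemma Mon_zero : Mon 0 = 1 := by
  rw [Mon, ee_zero, MvPowerSeries.monomial_zero_one]

lemma coeff_Mon_mul (m : ℕ) (f : Q2) (n k : ℕ) :
    MvPowerSeries.coeff (ee n k) (Mon m * f) =
      if m ≤ n ∧ m ≤ k then MvPowerSeries.coeff (ee (n - m) (k - m)) f else 0 := by
  rw [Mon, MvPowerSeries.coeff_monomial_mul]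
  simp only [ee_le, ee_sub, one_mul]

lemma ee_single : ee 1 0 = Finsupp.single (0 : Fin 2) 1 := by
  simp [ee]

lemma Xzero_eq : (MvPowerSeries.X (0 : Fin 2) : Q2) = MvPowerSeries.monomial (ee 1 0) 1 := by
  rw [MvPowerSeries.X, ee_single]

lemma X_mul_X : MvPowerSeries.X (0 : Fin 2) * MvPowerSeries.X (1 : Fin 2) = (Mon 1 : Q2) := by
  rw [MvPowerSeries.X, MvPowerSeries.X, MvPowerSeries.monomial_mul_monomial, Mon, one_mul]
  rfl

lemma coeff_X0_mul (f : Q2) (n k : ℕ) :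
    MvPowerSeries.coeff (ee n k) (MvPowerSeries.X (0 : Fin 2) * f) =
      if 1 ≤ n then MvPowerSeries.coeff (ee (n - 1) k) f else 0 := by
  rw [Xzero_eq, MvPowerSeries.coeff_monomial_mul]
  simp only [ee_le, ee_sub, one_mul, Nat.sub_zero, Nat.zero_le, and_true]

lemma W_unit : ((1 : Q2) + Mon 1) * Wi = 1 := by
  apply MvPowerSeries.ext
  intro d
  rw [ee_eq d]
  generalize d 0 = n
  generalize d 1 = k
  rw [add_mul, one_mul, map_add, coeff_Mon_mul, coeff_Wi, coeff_one_ee]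
  by_cases h : n = k
  · subst h
    rcases Nat.eq_zero_or_pos n with h0 | h0
    · subst h0; norm_num
    · rw [if_pos (⟨h0, h0⟩ : 1 ≤ n ∧ 1 ≤ n), coeff_Wi, if_pos rfl, if_pos rfl,
        if_neg (by omega)]
      have h1 : n - 1 + 1 = n := by omega
      calc (-1 : ℚ) ^ n + (-1 : ℚ) ^ (n - 1)
          = (-1 : ℚ) ^ (n - 1 + 1) + (-1 : ℚ) ^ (n - 1) := by rw [h1]
        _ = 0 := by rw [pow_succ]; ring
  · rw [if_neg h, if_neg (by omega : ¬(n = 0 ∧ k = 0))]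
    split_ifs with h2
    · rw [coeff_Wi, if_neg (by omega), zero_add]
    · norm_num

lemma G_unit : ((1 : Q2) - MvPowerSeries.X 0) * Gg = 1 := by
  apply MvPowerSeries.ext
  intro d
  rw [ee_eq d]
  generalize d 0 = n
  generalize d 1 = k
  rw [sub_mul, one_mul, map_sub, coeff_X0_mul, coeff_Gg, coeff_one_ee]
  by_cases hk : k = 0
  · subst hk
    rcases Nat.eq_zero_or_pos n with h0 | h0
    · subst h0; norm_num
    · rw [if_pos (by omega : 1 ≤ n), coeff_Gg, if_pos rfl,
        if_neg (by omega : ¬(n = 0 ∧ 0 = 0))]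
      ring
  · rw [if_neg hk, if_neg (by omega : ¬(n = 0 ∧ k = 0))]
    split_ifs with h2
    · rw [coeff_Gg, if_neg hk, sub_zero]
    · norm_num
lemma sum_range_add_choose (n j : ℕ) :
    ∑ a ∈ range (n + 1), (a + j).choose j = (n + j + 1).choose (j + 1) := by
  induction n with
  | zero => simp
  | succ n ih =>
    rw [Finset.sum_range_succ, ih]
    have h1 : (n + j + 1 + 1).choose (j + 1) = (n + j + 1).choose j + (n + j + 1).choose (j + 1) :=
      Nat.choose_succ_succ (n + j + 1) j
    have h2 : n + 1 + j = n + j + 1 := by omega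
    rw [h2]
    omega

lemma coeff_Wi_pow (p : ℕ) : ∀ n k : ℕ, MvPowerSeries.coeff (ee n k) (Wi ^ (p + 1)) =
    if n = k then (-1 : ℚ) ^ n * ((n + p).choose p : ℚ) else 0 := by
  induction p with
  | zero =>
    intro n k
    rw [pow_one, coeff_Wi]
    split_ifs <;> simp
  | succ p ih =>
    intro n k
    rw [pow_succ, coeff_mul_ee]
    by_cases h : n = k
    · subst h
      have hinner : ∀ i ∈ range (n + 1),
          (∑ j ∈ range (n + 1), MvPowerSeries.coeff (ee i j) (Wi ^ (p + 1)) *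
            MvPowerSeries.coeff (ee (n - i) (n - j)) Wi)
          = (-1 : ℚ) ^ n * ((i + p).choose p : ℚ) := by
        intro i hi
        simp only [Finset.mem_range] at hi
        rw [Finset.sum_eq_single i]
        · rw [ih, coeff_Wi, if_pos rfl, if_pos rfl]
          have hsplit : (-1 : ℚ) ^ i * (-1 : ℚ) ^ (n - i) = (-1 : ℚ) ^ n := by
            rw [← pow_add]
            congr 1
            omega
          calc (-1 : ℚ) ^ i * ((i + p).choose p : ℚ) * (-1 : ℚ) ^ (n - i)
              = ((-1 : ℚ) ^ i * (-1 : ℚ) ^ (n - i)) * ((i + p).choose p : ℚ) := by ring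
            _ = (-1 : ℚ) ^ n * ((i + p).choose p : ℚ) := by rw [hsplit]
        · intro j hj hji
          simp only [Finset.mem_range] at hj
          rw [ih, if_neg (by omega), zero_mul]
        · intro hni
          exact absurd (Finset.mem_range.mpr hi) hni
      rw [Finset.sum_congr rfl hinner, if_pos rfl, ← Finset.mul_sum]
      have : ∑ i ∈ range (n + 1), ((i + p).choose p : ℚ)
          = ((n + (p + 1)).choose (p + 1) : ℚ) := by
        rw [← Nat.cast_sum]
        norm_cast
        rw [show n + (p + 1) = n + p + 1 by omega]
        exact sum_range_add_choose n p
      rw [this]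
    · rw [if_neg h]
      apply Finset.sum_eq_zero
      intro i hi
      apply Finset.sum_eq_zero
      intro j hj
      simp only [Finset.mem_range] at hi hj
      rw [ih, coeff_Wi]
      split_ifs with h1 h2
      · omega
      · rw [mul_zero]
      · rw [zero_mul]
      · rw [zero_mul]

lemma coeff_Gg_pow (j : ℕ) : ∀ n k : ℕ, MvPowerSeries.coeff (ee n k) (Gg ^ (j + 1)) =
    if k = 0 then ((n + j).choose j : ℚ) else 0 := by
  induction j with
  | zero =>
    intro n k
    rw [pow_one, coeff_Gg]
    split_ifs <;> simp
  | succ j ih =>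
    intro n k
    rw [pow_succ, coeff_mul_ee]
    by_cases hk : k = 0
    · subst hk
      rw [if_pos rfl]
      rw [show (0:ℕ) + 1 = 1 from rfl]
      simp only [Finset.sum_range_one]
      have hinner : ∀ i ∈ range (n + 1),
          MvPowerSeries.coeff (ee i 0) (Gg ^ (j + 1)) *
            MvPowerSeries.coeff (ee (n - i) (0 - 0)) Gg
          = ((i + j).choose j : ℚ) := by
        intro i hi
        rw [ih, coeff_Gg, if_pos rfl, if_pos rfl, mul_one]
      rw [Finset.sum_congr rfl hinner, ← Nat.cast_sum]
      norm_cast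
      rw [show n + (j + 1) = n + j + 1 by omega]
      exact sum_range_add_choose n j
    · rw [if_neg hk]
      apply Finset.sum_eq_zero
      intro i hi
      apply Finset.sum_eq_zero
      intro l hl
      simp only [Finset.mem_range] at hi hl
      rw [ih, coeff_Gg]
      split_ifs with h1 h2
      · omega
      · rw [mul_zero]
      · rw [zero_mul]
      · rw [zero_mul]

lemma twoA (k : ℕ) :
    2 * (∑ i ∈ range (k + 1), i * (Nat.centralBinom i * Nat.centralBinom (k - i)))
      = k * ∑ i ∈ range (k + 1), Nat.centralBinom i * Nat.centralBinom (k - i) := by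
  have h1 : ∑ i ∈ range (k + 1), i * (Nat.centralBinom i * Nat.centralBinom (k - i))
      = ∑ i ∈ range (k + 1),
          (k - i) * (Nat.centralBinom (k - i) * Nat.centralBinom i) := by
    have hrefl := Finset.sum_range_reflect
      (fun i => i * (Nat.centralBinom i * Nat.centralBinom (k - i))) (k + 1)
    rw [← hrefl]
    apply Finset.sum_congr rfl
    intro i hi
    simp only [Finset.mem_range] at hi
    have h2 : k + 1 - 1 - i = k - i := by omega
    have h3 : k - (k - i) = i := by omega
    simp only [h2, h3]
  rw [two_mul]
  nth_rewrite 2 [h1]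
  rw [← Finset.sum_add_distrib, Finset.mul_sum]
  apply Finset.sum_congr rfl
  intro i hi
  simp only [Finset.mem_range] at hi
  rw [mul_comm (Nat.centralBinom (k - i)) (Nat.centralBinom i), ← add_mul]
  congr 1
  omega

lemma cb_conv (m : ℕ) :
    (∑ i ∈ range (m + 1), Nat.centralBinom i * Nat.centralBinom (m - i)) = 4 ^ m := by
  induction m with
  | zero => simp [Nat.centralBinom]
  | succ m ih =>
    have hA : ∑ i ∈ range (m + 2), i * (Nat.centralBinom i * Nat.centralBinom (m + 1 - i))
        = ∑ i ∈ range (m + 1), (2 * (2 * i + 1)) * (Nat.centralBinom i * Nat.centralBinom (m - i)) := by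
      rw [Finset.sum_range_succ']
      simp only [zero_mul, add_zero]
      apply Finset.sum_congr rfl
      intro i hi
      have h2 : m + 1 - (i + 1) = m - i := by omega
      rw [h2, ← mul_assoc, Nat.succ_mul_centralBinom_succ, mul_assoc]
    have expand : ∑ i ∈ range (m + 1), (2 * (2 * i + 1)) * (Nat.centralBinom i * Nat.centralBinom (m - i))
        = 4 * (∑ i ∈ range (m + 1), i * (Nat.centralBinom i * Nat.centralBinom (m - i)))
          + 2 * (∑ i ∈ range (m + 1), Nat.centralBinom i * Nat.centralBinom (m - i)) := by
      rw [Finset.mul_sum, Finset.mul_sum, ← Finset.sum_add_distrib]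
      apply Finset.sum_congr rfl
      intro i _
      ring
    have h2 := twoA m
    rw [ih] at h2
    have key : (m + 1) * (∑ i ∈ range (m + 2), Nat.centralBinom i * Nat.centralBinom (m + 1 - i))
        = (m + 1) * (4 * 4 ^ m) := by
      rw [← twoA (m + 1), hA, expand, ih]
      calc 2 * (4 * (∑ i ∈ range (m + 1), i * (Nat.centralBinom i * Nat.centralBinom (m - i))) + 2 * 4 ^ m)
          = 4 * (2 * (∑ i ∈ range (m + 1), i * (Nat.centralBinom i * Nat.centralBinom (m - i)))) + 4 * 4 ^ m := by ring
        _ = 4 * (m * 4 ^ m) + 4 * 4 ^ m := by rw [h2]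
        _ = (m + 1) * (4 * 4 ^ m) := by ring
    have := Nat.eq_of_mul_eq_mul_left (by omega : 0 < m + 1) key
    rw [this, pow_succ]
    ring
def aCoef (n k : ℕ) : ℚ :=
  ∑ j ∈ Finset.range (k + 1),
    ((2 * j).choose j : ℚ) * ((k + j).choose (k - j) : ℚ) *
      (if n < k then 0 else ((n - k + j - 1).choose (n - k) : ℚ)) *
      (-1 : ℚ) ^ (k - j)

def F : Q2 := fun d => aCoef (d 0) (d 1)

lemma coeff_F (n k : ℕ) : MvPowerSeries.coeff (ee n k) F = aCoef n k := by
  rw [MvPowerSeries.coeff_apply]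
  simp only [F, ee_apply0, ee_apply1]

def tf (j n k : ℕ) : ℚ :=
  ((2 * j).choose j : ℚ) * ((k + j).choose (k - j) : ℚ) *
    (if n < k then 0 else ((n - k + j - 1).choose (n - k) : ℚ)) * (-1 : ℚ) ^ (k - j)

lemma aCoef_eq_sum_tf (n k : ℕ) : aCoef n k = ∑ j ∈ Finset.range (k + 1), tf j n k := rfl

def term (j : ℕ) : Q2 :=
  MvPowerSeries.C ((2 * j).choose j : ℚ) * (Mon j * (Wi ^ (2 * j + 1) * Gg ^ j))

def FN (N : ℕ) : Q2 := ∑ j ∈ range N, term j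

lemma coeff_WG_succ (i a b : ℕ) :
    MvPowerSeries.coeff (ee a b) (Wi ^ (2 * (i + 1) + 1) * Gg ^ (i + 1)) =
      if b ≤ a then
        (-1 : ℚ) ^ b * ((b + 2 * (i + 1)).choose (2 * (i + 1)) : ℚ) *
          ((a - b + i).choose i : ℚ)
      else 0 := by
  rw [coeff_mul_ee]
  by_cases hba : b ≤ a
  · rw [if_pos hba]
    have houter : ∀ c ∈ range (a + 1),
        (∑ d ∈ range (b + 1), MvPowerSeries.coeff (ee c d) (Wi ^ (2 * (i + 1) + 1)) *
          MvPowerSeries.coeff (ee (a - c) (b - d)) (Gg ^ (i + 1)))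
        = if c = b then
            (-1 : ℚ) ^ b * ((b + 2 * (i + 1)).choose (2 * (i + 1)) : ℚ) *
              ((a - b + i).choose i : ℚ)
          else 0 := by
      intro c hc
      simp only [Finset.mem_range] at hc
      rw [Finset.sum_eq_single b]
      · rw [coeff_Wi_pow, coeff_Gg_pow]
        by_cases hcb : c = b
        · subst hcb
          rw [if_pos rfl, if_pos rfl, if_pos (Nat.sub_self c)]
        · rw [if_neg hcb, zero_mul, if_neg hcb]
      · intro d hd hdb
        simp only [Finset.mem_range] at hd
        rw [coeff_Gg_pow, if_neg (by omega : ¬ b - d = 0), mul_zero]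
      · intro hb
        exact absurd (Finset.mem_range.mpr (by omega)) hb
    rw [Finset.sum_congr rfl houter, Finset.sum_ite_eq' (range (a + 1)) b,
      if_pos (Finset.mem_range.mpr (by omega))]
  · rw [if_neg hba]
    apply Finset.sum_eq_zero
    intro c hc
    apply Finset.sum_eq_zero
    intro d hd
    simp only [Finset.mem_range] at hc hd
    rw [coeff_Wi_pow, coeff_Gg_pow]
    split_ifs with h1 h2
    · omega
    · rw [mul_zero]
    · rw [zero_mul]
    · rw [zero_mul]

lemma coeff_term (j n k : ℕ) :
    MvPowerSeries.coeff (ee n k) (term j) = if j ≤ k then tf j n k else 0 := by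
  rw [term, MvPowerSeries.coeff_C_mul, coeff_Mon_mul]
  by_cases hjk : j ≤ k
  case neg =>
    rw [if_neg (by omega : ¬(j ≤ n ∧ j ≤ k)), if_neg hjk, mul_zero]
  rw [if_pos hjk]
  by_cases hnk : n < k
  · have htf : tf j n k = 0 := by rw [tf, if_pos hnk]; ring
    rw [htf]
    by_cases hjn : j ≤ n
    · rw [if_pos ⟨hjn, hjk⟩]
      rcases j with _ | i
      · rw [show 2 * 0 + 1 = 1 from rfl, pow_one, pow_zero, mul_one, Nat.sub_zero,
          Nat.sub_zero, coeff_Wi, if_neg (by omega), mul_zero]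
      · rw [coeff_WG_succ, if_neg (by omega : ¬ (k - (i + 1) ≤ n - (i + 1))), mul_zero]
    · rw [if_neg (by omega : ¬(j ≤ n ∧ j ≤ k)), mul_zero]
  · push_neg at hnk
    rw [if_pos ⟨by omega, hjk⟩]
    rcases j with _ | i
    · rw [show 2 * 0 + 1 = 1 from rfl, pow_one, pow_zero, mul_one, Nat.sub_zero,
        Nat.sub_zero, coeff_Wi, tf, if_neg (by omega : ¬ n < k)]
      by_cases hnk2 : n = k
      · subst hnk2
        rw [if_pos rfl]
        simp [Nat.sub_self]
      · rw [if_neg hnk2]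
        have hz : (n - k + 0 - 1).choose (n - k) = 0 :=
          Nat.choose_eq_zero_of_lt (by omega)
        rw [hz]
        norm_num
    · rw [coeff_WG_succ, if_pos (by omega : k - (i + 1) ≤ n - (i + 1)), tf,
        if_neg (by omega : ¬ n < k)]
      have h1 : (n - (i + 1)) - (k - (i + 1)) = n - k := by omega
      have h2 : (k - (i + 1)) + 2 * (i + 1) = k + (i + 1) := by omega
      have h3 : (k + (i + 1)).choose (2 * (i + 1)) = (k + (i + 1)).choose (k - (i + 1)) := by
        rw [show 2 * (i + 1) = (k + (i + 1)) - (k - (i + 1)) by omega]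
        exact Nat.choose_symm (by omega)
      have h4 : (n - k + i).choose i = (n - k + (i + 1) - 1).choose (n - k) := by
        have h5 := Nat.choose_symm (show n - k ≤ n - k + i by omega)
        rw [show (n - k + i) - (n - k) = i from by omega] at h5
        rw [show n - k + (i + 1) - 1 = n - k + i from by omega, ← h5]
      rw [h1, h2, h3, h4]
      ring

lemma coeff_FN (N n k : ℕ) (h : k < N) :
    MvPowerSeries.coeff (ee n k) (FN N) = aCoef n k := by
  rw [FN, map_sum, Finset.sum_congr rfl (fun j _ => coeff_term j n k),
    ← Finset.sum_filter]
  have hfil : (range N).filter (fun j => j ≤ k) = range (k + 1) := by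
    ext j
    simp only [Finset.mem_filter, Finset.mem_range]
    omega
  rw [hfil, aCoef_eq_sum_tf]
def lowZero (k : ℕ) (f : Q2) : Prop :=
  ∀ d : Fin 2 →₀ ℕ, d 1 ≤ k → MvPowerSeries.coeff d f = 0

lemma lowZero_mul {k : ℕ} {f : Q2} (h : lowZero k f) (g : Q2) : lowZero k (f * g) := by
  intro d hd
  rw [MvPowerSeries.coeff_mul]
  apply Finset.sum_eq_zero
  intro p hp
  rw [Finset.HasAntidiagonal.mem_antidiagonal] at hp
  have h1 : p.1 1 ≤ d 1 := by
    have h2 := congrArg (fun x => x 1) hp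
    simp only [Finsupp.add_apply] at h2
    omega
  rw [h p.1 (le_trans h1 hd), zero_mul]

lemma lowZero_Mon {k m : ℕ} (h : k < m) (f : Q2) : lowZero k (Mon m * f) := by
  intro d hd
  rw [ee_eq d, coeff_Mon_mul, if_neg (by omega : ¬(m ≤ d 0 ∧ m ≤ d 1))]

def PP : Q2 :=
  (MvPowerSeries.X (0 : Fin 2) * MvPowerSeries.X 1 + 1) ^ 2 *
      (MvPowerSeries.X 0 - 1) + 4 * MvPowerSeries.X 0 * MvPowerSeries.X 1

lemma PP_eq : PP = (Mon 1 + 1) ^ 2 * (MvPowerSeries.X 0 - 1) + 4 * Mon 1 := by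
  rw [PP, ← X_mul_X]
  ring

def TT (m : ℕ) : Q2 := Mon m * (Wi ^ (2 * m + 2) * Gg ^ m)
def VV (m : ℕ) : Q2 := Mon m * (Wi ^ (2 * m) * Gg ^ (m - 1))

lemma TT_mul_PP_zero : TT 0 * PP = (MvPowerSeries.X 0 - 1) + 4 * VV 1 := by
  rw [TT, VV, PP_eq, Mon_zero, show (2 * 0 + 2) = 2 from rfl, show (2 * 1) = 2 from rfl,
    pow_zero]
  linear_combination ((MvPowerSeries.X (0 : Fin 2) - 1) * ((1 + Mon 1) * Wi + 1)) * W_unit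

lemma TT_mul_PP_succ (i : ℕ) : TT (i + 1) * PP = 4 * VV (i + 2) - VV (i + 1) := by
  rw [TT, VV, VV, PP_eq,
    show (2 * (i + 1) + 2) = (2 * i + 2) + 2 by ring,
    show (2 * (i + 2)) = (2 * i + 2) + 2 by ring,
    show (2 * (i + 1)) = 2 * i + 2 by ring,
    show (i + 2 - 1) = i + 1 from rfl,
    show (i + 1 - 1) = i from rfl,
    pow_add, pow_succ Gg i,
    show (i + 2) = (i + 1) + 1 from rfl, ← Mon_mul_Mon (i + 1) 1]
  linear_combination
    (-(Mon (i + 1) * Wi ^ (2 * i + 2) * Gg ^ i * ((1 - MvPowerSeries.X (0 : Fin 2)) * Gg) *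
        ((1 + Mon 1) * Wi + 1))) * W_unit +
    (-(Mon (i + 1) * Wi ^ (2 * i + 2) * Gg ^ i)) * G_unit

def DD (N m : ℕ) : ℚ :=
  ∑ p ∈ (range N ×ˢ range N).filter (fun p => p.1 + p.2 = m),
    ((2 * p.1).choose p.1 : ℚ) * ((2 * p.2).choose p.2 : ℚ)

lemma DD_eq (N m : ℕ) (h : m < N) : DD N m = 4 ^ m := by
  rw [DD]
  have hfil : (range N ×ˢ range N).filter (fun p => p.1 + p.2 = m)
      = Finset.HasAntidiagonal.antidiagonal m := by
    ext p
    simp only [Finset.mem_filter, Finset.mem_product, Finset.mem_range,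
      Finset.HasAntidiagonal.mem_antidiagonal]
    omega
  rw [hfil, Finset.Nat.sum_antidiagonal_eq_sum_range_succ_mk]
  have : ∀ p ∈ range (m + 1),
      ((2 * p).choose p : ℚ) * ((2 * (m - p)).choose (m - p) : ℚ)
        = ((Nat.centralBinom p * Nat.centralBinom (m - p) : ℕ) : ℚ) := by
    intro p _
    rw [Nat.centralBinom, Nat.centralBinom]
    push_cast
    ring
  rw [Finset.sum_congr rfl this, ← Nat.cast_sum, cb_conv]
  push_cast
  ring

lemma FN_sq (N : ℕ) : FN N ^ 2 = ∑ p ∈ (range N ×ˢ range N),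
    MvPowerSeries.C (((2 * p.1).choose p.1 : ℚ) * ((2 * p.2).choose p.2 : ℚ)) *
      TT (p.1 + p.2) := by
  rw [FN, sq, Finset.sum_mul_sum, ← Finset.sum_product']
  apply Finset.sum_congr rfl
  intro p _
  rw [term, term, TT,
    show (2 * (p.1 + p.2) + 2) = (2 * p.1 + 1) + (2 * p.2 + 1) by ring,
    pow_add, ← Mon_mul_Mon p.1 p.2, pow_add, map_mul]
  ring

def hh (m : ℕ) : Q2 := MvPowerSeries.C ((4 : ℚ) ^ m) * VV m

lemma FN_sq_PP (M : ℕ) :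
    FN (M + 1) ^ 2 * PP =
      ((MvPowerSeries.X 0 - 1) + hh (M + 1))
        + ∑ m ∈ Finset.Ico (M + 1) (2 * M + 1),
            MvPowerSeries.C (DD (M + 1) m) * (TT m * PP) := by
  rw [FN_sq, Finset.sum_mul]
  have hstep : ∀ p ∈ (range (M + 1) ×ˢ range (M + 1)),
      (MvPowerSeries.C
        (((2 * p.1).choose p.1 : ℚ) * ((2 * p.2).choose p.2 : ℚ)) * TT (p.1 + p.2)) * PP
      = MvPowerSeries.C
        (((2 * p.1).choose p.1 : ℚ) * ((2 * p.2).choose p.2 : ℚ)) * (TT (p.1 + p.2) * PP) := by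
    intro p _
    rw [mul_assoc]
  rw [Finset.sum_congr rfl hstep]
  have hmaps : ∀ p ∈ (range (M + 1) ×ˢ range (M + 1)),
      p.1 + p.2 ∈ range (2 * M + 1) := by
    intro p hp
    simp only [Finset.mem_product, Finset.mem_range] at hp ⊢
    omega
  rw [← Finset.sum_fiberwise_of_maps_to hmaps]
  have hinner : ∀ m ∈ range (2 * M + 1),
      (∑ p ∈ (range (M + 1) ×ˢ range (M + 1)).filter (fun p => p.1 + p.2 = m),
        MvPowerSeries.C
          (((2 * p.1).choose p.1 : ℚ) * ((2 * p.2).choose p.2 : ℚ)) * (TT (p.1 + p.2) * PP))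
      = MvPowerSeries.C (DD (M + 1) m) * (TT m * PP) := by
    intro m _
    have h1 : ∀ p ∈ (range (M + 1) ×ˢ range (M + 1)).filter (fun p => p.1 + p.2 = m),
        MvPowerSeries.C
          (((2 * p.1).choose p.1 : ℚ) * ((2 * p.2).choose p.2 : ℚ)) * (TT (p.1 + p.2) * PP)
        = MvPowerSeries.C
          (((2 * p.1).choose p.1 : ℚ) * ((2 * p.2).choose p.2 : ℚ)) * (TT m * PP) := by
      intro p hp
      rw [Finset.mem_filter] at hp
      rw [hp.2]
    rw [Finset.sum_congr rfl h1, ← Finset.sum_mul, ← map_sum, DD]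
  rw [Finset.sum_congr rfl hinner]
  have hsplit : range (2 * M + 1) = Finset.Ico 0 (2 * M + 1) := by
    rw [Finset.range_eq_Ico]
  rw [hsplit, ← Finset.sum_Ico_consecutive _ (Nat.zero_le (M + 1)) (by omega : M + 1 ≤ 2 * M + 1),
    ← Finset.range_eq_Ico]
  congr 1
  -- remaining: ∑ m ∈ range (M+1), C (DD (M+1) m) * (TT m * PP) = (X 0 - 1) + hh (M+1)
  have hDD : ∀ m ∈ range (M + 1),
      MvPowerSeries.C (DD (M + 1) m) * (TT m * PP)
        = MvPowerSeries.C ((4 : ℚ) ^ m) * (TT m * PP) := by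
    intro m hm
    simp only [Finset.mem_range] at hm
    rw [DD_eq (M + 1) m (by omega)]
  rw [Finset.sum_congr rfl hDD, Finset.sum_range_succ']
  have hzero : MvPowerSeries.C ((4 : ℚ) ^ 0) * (TT 0 * PP)
      = (MvPowerSeries.X 0 - 1) + hh 1 := by
    rw [pow_zero, map_one, one_mul, TT_mul_PP_zero, hh]
    have h4 : MvPowerSeries.C ((4 : ℚ) ^ 1) = (4 : Q2) := by
      rw [pow_one]
      exact map_ofNat _ 4
    rw [h4]
  have hsucc : ∀ i ∈ range M,
      MvPowerSeries.C ((4 : ℚ) ^ (i + 1)) * (TT (i + 1) * PP)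
        = hh (i + 2) - hh (i + 1) := by
    intro i _
    rw [TT_mul_PP_succ, hh, hh,
      show (4 : ℚ) ^ (i + 2) = 4 * (4 : ℚ) ^ (i + 1) by ring, map_mul,
      show MvPowerSeries.C (4 : ℚ) = (4 : Q2) from map_ofNat _ 4]
    ring
  rw [Finset.sum_congr rfl hsucc, hzero]
  have htel := Finset.sum_range_sub (fun i => hh (i + 1)) M
  -- htel : ∑ i ∈ range M, (hh (i+1+1) - hh (i+1)) = hh (M+1) - hh 1
  rw [htel]
  ring
lemma key_low (M : ℕ) (d : Fin 2 →₀ ℕ) (hd : d 1 ≤ M) :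
    MvPowerSeries.coeff d (FN (M + 1) ^ 2 * PP) =
      MvPowerSeries.coeff d (MvPowerSeries.X 0 - 1) := by
  rw [FN_sq_PP M, map_add, map_add]
  have h1 : MvPowerSeries.coeff d (hh (M + 1)) = 0 := by
    have hrw : hh (M + 1) = Mon (M + 1) *
        (MvPowerSeries.C ((4 : ℚ) ^ (M + 1)) *
          (Wi ^ (2 * (M + 1)) * Gg ^ (M + 1 - 1))) := by
      rw [hh, VV]; ring
    rw [hrw]
    exact lowZero_Mon (by omega) _ d hd
  have h2 : MvPowerSeries.coeff d
      (∑ m ∈ Finset.Ico (M + 1) (2 * M + 1),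
        MvPowerSeries.C (DD (M + 1) m) * (TT m * PP)) = 0 := by
    rw [map_sum]
    apply Finset.sum_eq_zero
    intro m hm
    rw [Finset.mem_Ico] at hm
    have hrw : MvPowerSeries.C (DD (M + 1) m) * (TT m * PP)
        = Mon m * (MvPowerSeries.C (DD (M + 1) m) *
            ((Wi ^ (2 * m + 2) * Gg ^ m) * PP)) := by
      rw [TT]; ring
    rw [hrw]
    exact lowZero_Mon (by omega) _ d hd
  rw [h1, h2]
  ring

lemma F_sub_FN (k : ℕ) : lowZero k (F - FN (k + 1)) := by
  intro d hd
  rw [map_sub, ee_eq d, coeff_F, coeff_FN (k + 1) _ _ (by omega), sub_self]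

lemma F_sq_PP : F ^ 2 * PP = MvPowerSeries.X 0 - 1 := by
  apply MvPowerSeries.ext
  intro d
  have hd : d 1 ≤ d 1 := le_rfl
  have hdiff : F ^ 2 * PP - FN (d 1 + 1) ^ 2 * PP
      = (F - FN (d 1 + 1)) * ((F + FN (d 1 + 1)) * PP) := by ring
  have h0 : MvPowerSeries.coeff d (F ^ 2 * PP - FN (d 1 + 1) ^ 2 * PP) = 0 := by
    rw [hdiff]
    exact lowZero_mul (F_sub_FN (d 1)) _ d hd
  rw [map_sub] at h0
  have h1 := key_low (d 1) d hd
  linarith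

lemma F_const : MvPowerSeries.constantCoeff F = 1 := by
  have h0 : MvPowerSeries.constantCoeff F = MvPowerSeries.coeff (ee 0 0) F := by
    rw [ee_zero, MvPowerSeries.coeff_zero_eq_constantCoeff]
  rw [h0, coeff_F]
  norm_num [aCoef]

end StmtAux

/-- The power series `J = ((xy+1)² + 4xy/(x−1))^{−1/2} ∈ ℚ[[x,y]]` (characterized by
`J²·((xy+1)²(x−1)+4xy) = x−1` together with constant term `1`, the branch given by the
generalized binomial theorem) has coefficient of `xⁿyᵏ` equal to
`∑_{j=0}^{k} C(2j,j)·C(k+j,k−j)·C(n−k+j−1, n−k)·(−1)^{k−j}`, binomials vanishing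
outside their range. -/
theorem stmt_13 (J : MvPowerSeries (Fin 2) ℚ)
    (hJ : J ^ 2 * ((MvPowerSeries.X (0 : Fin 2) * MvPowerSeries.X 1 + 1) ^ 2 *
            (MvPowerSeries.X 0 - 1) + 4 * MvPowerSeries.X 0 * MvPowerSeries.X 1) =
          MvPowerSeries.X 0 - 1)
    (hJ0 : MvPowerSeries.constantCoeff J = 1)
    (n k : ℕ) :
    MvPowerSeries.coeff (Finsupp.single 0 n + Finsupp.single 1 k) J =
      ∑ j ∈ Finset.range (k + 1),
        ((2 * j).choose j : ℚ) * ((k + j).choose (k - j) : ℚ) *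
          (if n < k then 0 else ((n - k + j - 1).choose (n - k) : ℚ)) *
          (-1 : ℚ) ^ (k - j) := by
  classical
  have hJ' : J ^ 2 * PP = MvPowerSeries.X 0 - 1 := hJ
  have hPc : MvPowerSeries.constantCoeff PP = ((-1 : ℚˣ) : ℚ) := by
    rw [PP]
    simp [MvPowerSeries.constantCoeff_X]
  have hPi := MvPowerSeries.mul_invOfUnit PP (-1 : ℚˣ) hPc
  have hsq : J ^ 2 = F ^ 2 := by
    have e1 : J ^ 2 * PP = F ^ 2 * PP := hJ'.trans F_sq_PP.symm
    have e2 : J ^ 2 * (PP * MvPowerSeries.invOfUnit PP (-1 : ℚˣ))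
        = F ^ 2 * (PP * MvPowerSeries.invOfUnit PP (-1 : ℚˣ)) := by
      rw [← mul_assoc, ← mul_assoc, e1]
    rwa [hPi, mul_one, mul_one] at e2
  have hu2 : MvPowerSeries.constantCoeff (J + F)
      = ((Units.mk0 (2 : ℚ) two_ne_zero : ℚˣ) : ℚ) := by
    rw [map_add, hJ0, F_const, Units.val_mk0]
    norm_num
  have hQi := MvPowerSeries.mul_invOfUnit (J + F) (Units.mk0 (2 : ℚ) two_ne_zero) hu2
  have hJF : J = F := by
    have hz : (J - F) * (J + F) = 0 := by
      have hr : (J - F) * (J + F) = J ^ 2 - F ^ 2 := by ring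
      rw [hr, hsq, sub_self]
    have hcalc : J - F
        = (J - F) * ((J + F) * MvPowerSeries.invOfUnit (J + F) (Units.mk0 (2 : ℚ) two_ne_zero)) := by
      rw [hQi, mul_one]
    rw [← mul_assoc, hz, zero_mul] at hcalc
    exact sub_eq_zero.mp hcalc
  rw [hJF]
  have hidx : (Finsupp.single 0 n + Finsupp.single 1 k : Fin 2 →₀ ℕ) = ee n k := rfl
  rw [hidx, coeff_F]
  rfl
end

section
/- For n ≥ 2 and 1 ≤ j ≤ n−1, let x be the permutation of {1,…,2n} defined by x_1 = 1; x_i = 2n−j+i−2 for 2 ≤ i ≤ j+1; x_i = i for j+2 ≤ i ≤ 2n−j−1; x_i = j+i−2n+2 for 2n−j ≤ i ≤ 2n−1; and x_{2n} = 2n. Then x is a signed permutation (x_i + x_{2n+1−i} = 2n+1 for all i), and the permutation y obtained from x by reversing each maximal ascending run of x has the property that reversing each maximal descending run of y recovers x. -/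
/-- The last descent position `d < i` of the word `x₁ … x_L` (`0` if none). -/
noncomputable def lastDescBefore (L : ℕ) (x : ℕ → ℕ) (i : ℕ) : ℕ :=
  sSup ({0} ∪ {d | d < i ∧ 1 ≤ d ∧ d < L ∧ x (d + 1) < x d})

/-- The first descent position `d ≥ i` of the word `x₁ … x_L` (`L` if none). -/
noncomputable def nextDescFrom (L : ℕ) (x : ℕ → ℕ) (i : ℕ) : ℕ :=
  sInf ({L} ∪ {d | i ≤ d ∧ d < L ∧ x (d + 1) < x d})

/-- The word obtained from `x₁ … x_L` by reversing each maximal ascending run in place: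
position `i` lies in the maximal ascending run `[s+1, e]` where `s` is the last descent
before `i` and `e` the next descent from `i`, and it receives the entry `x_{s+1+e−i}`. -/
noncomputable def revAscRuns (L : ℕ) (x : ℕ → ℕ) : ℕ → ℕ := fun i =>
  x (lastDescBefore L x i + 1 + nextDescFrom L x i - i)

/-- The last ascent position `d < i` of the word (`0` if none). -/
noncomputable def lastAscBefore (L : ℕ) (x : ℕ → ℕ) (i : ℕ) : ℕ :=
  sSup ({0} ∪ {d | d < i ∧ 1 ≤ d ∧ d < L ∧ x d < x (d + 1)})

/-- The first ascent position `d ≥ i` of the word (`L` if none). -/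
noncomputable def nextAscFrom (L : ℕ) (x : ℕ → ℕ) (i : ℕ) : ℕ :=
  sInf ({L} ∪ {d | i ≤ d ∧ d < L ∧ x d < x (d + 1)})

/-- The word obtained by reversing each maximal descending run in place. -/
noncomputable def revDescRuns (L : ℕ) (x : ℕ → ℕ) : ℕ → ℕ := fun i =>
  x (lastAscBefore L x i + 1 + nextAscFrom L x i - i)

private lemma sSup_eq_of' {S : Set ℕ} {m : ℕ} (h1 : m ∈ S) (h2 : ∀ k ∈ S, k ≤ m) :
    sSup S = m := IsGreatest.csSup_eq ⟨h1, h2⟩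

private lemma sInf_eq_of' {S : Set ℕ} {m : ℕ} (h1 : m ∈ S) (h2 : ∀ k ∈ S, m ≤ k) :
    sInf S = m := IsLeast.csInf_eq ⟨h1, h2⟩

private lemma lastDescBefore_eq {L : ℕ} {x : ℕ → ℕ} {i m : ℕ}
    (h1 : m = 0 ∨ (m < i ∧ 1 ≤ m ∧ m < L ∧ x (m + 1) < x m))
    (h2 : ∀ d, d < i → 1 ≤ d → d < L → x (d + 1) < x d → d ≤ m) :
    lastDescBefore L x i = m := by
  apply sSup_eq_of'
  · rcases h1 with h | h
    · exact Or.inl (by simp [h])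
    · exact Or.inr h
  · rintro k (hk | hk)
    · simp only [Set.mem_singleton_iff] at hk; omega
    · exact h2 k hk.1 hk.2.1 hk.2.2.1 hk.2.2.2

private lemma nextDescFrom_eq {L : ℕ} {x : ℕ → ℕ} {i m : ℕ}
    (h1 : m = L ∨ (i ≤ m ∧ m < L ∧ x (m + 1) < x m)) (hL : m ≤ L)
    (h2 : ∀ d, i ≤ d → d < L → x (d + 1) < x d → m ≤ d) :
    nextDescFrom L x i = m := by
  apply sInf_eq_of'
  · rcases h1 with h | h
    · exact Or.inl (by simp [h])
    · exact Or.inr h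
  · rintro k (hk | hk)
    · simp only [Set.mem_singleton_iff] at hk; omega
    · exact h2 k hk.1 hk.2.1 hk.2.2

private lemma lastAscBefore_eq {L : ℕ} {x : ℕ → ℕ} {i m : ℕ}
    (h1 : m = 0 ∨ (m < i ∧ 1 ≤ m ∧ m < L ∧ x m < x (m + 1)))
    (h2 : ∀ d, d < i → 1 ≤ d → d < L → x d < x (d + 1) → d ≤ m) :
    lastAscBefore L x i = m := by
  apply sSup_eq_of'
  · rcases h1 with h | h
    · exact Or.inl (by simp [h])
    · exact Or.inr h
  · rintro k (hk | hk)
    · simp only [Set.mem_singleton_iff] at hk; omega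
    · exact h2 k hk.1 hk.2.1 hk.2.2.1 hk.2.2.2

private lemma nextAscFrom_eq {L : ℕ} {x : ℕ → ℕ} {i m : ℕ}
    (h1 : m = L ∨ (i ≤ m ∧ m < L ∧ x m < x (m + 1))) (hL : m ≤ L)
    (h2 : ∀ d, i ≤ d → d < L → x d < x (d + 1) → m ≤ d) :
    nextAscFrom L x i = m := by
  apply sInf_eq_of'
  · rcases h1 with h | h
    · exact Or.inl (by simp [h])
    · exact Or.inr h
  · rintro k (hk | hk)
    · simp only [Set.mem_singleton_iff] at hk; omega
    · exact h2 k hk.1 hk.2.1 hk.2.2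

set_option maxHeartbeats 2000000 in
/-- For `n ≥ 2` and `1 ≤ j ≤ n−1`, the permutation `x` of `{1,…,2n}` given by `x₁ = 1`,
`x_i = 2n−j+i−2` for `2 ≤ i ≤ j+1`, `x_i = i` for `j+2 ≤ i ≤ 2n−j−1`,
`x_i = j+i−2n+2` for `2n−j ≤ i ≤ 2n−1`, `x_{2n} = 2n` is a signed permutation
(`x_i + x_{2n+1−i} = 2n+1`), and reversing each maximal descending run of the word `y`
obtained by reversing each maximal ascending run of `x` recovers `x`. -/
theorem stmt_15 (n j : ℕ) (hn : 2 ≤ n) (hj1 : 1 ≤ j) (hj2 : j ≤ n - 1)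
    (x : ℕ → ℕ)
    (hx : ∀ i, x i = if i = 1 then 1 else if i ≤ j + 1 then 2 * n - j + i - 2
        else if i ≤ 2 * n - j - 1 then i else if i ≤ 2 * n - 1 then j + i + 2 - 2 * n
        else 2 * n) :
    Set.BijOn x (Set.Icc 1 (2 * n)) (Set.Icc 1 (2 * n)) ∧
    (∀ i, 1 ≤ i → i ≤ 2 * n → x i + x (2 * n + 1 - i) = 2 * n + 1) ∧
    (∀ i, 1 ≤ i → i ≤ 2 * n → revDescRuns (2 * n) (revAscRuns (2 * n) x) i = x i) := by
  have hv1 : x 1 = 1 := by rw [hx]; split_ifs <;> omega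
  have hv2 : ∀ i, 2 ≤ i → i ≤ j + 1 → x i = 2 * n - j + i - 2 := by
    intro i a b; rw [hx]; split_ifs <;> omega
  have hv3 : ∀ i, j + 2 ≤ i → i ≤ 2 * n - j - 1 → x i = i := by
    intro i a b; rw [hx]; split_ifs <;> omega
  have hv4 : ∀ i, 2 * n - j ≤ i → i ≤ 2 * n - 1 → x i = j + i + 2 - 2 * n := by
    intro i a b; rw [hx]; split_ifs <;> omega
  have hv5 : x (2 * n) = 2 * n := by rw [hx]; split_ifs <;> omega
  -- descents of x
  have hdesc : ∀ d, 1 ≤ d → d < 2 * n →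
      (x (d + 1) < x d ↔ (d = j + 1 ∨ d = 2 * n - j - 1)) := by
    intro d h1 h2
    rw [hx d, hx (d + 1)]
    split_ifs <;> omega
  -- revAscRuns equals x ∘ σ on [1, 2n]
  have hy : ∀ i, 1 ≤ i → i ≤ 2 * n → revAscRuns (2 * n) x i =
      x (if i ≤ j + 1 then j + 2 - i else if i ≤ 2 * n - j - 1 then 2 * n + 1 - i
         else 4 * n - j - i) := by
    intro i h1 h2
    show x (lastDescBefore (2 * n) x i + 1 + nextDescFrom (2 * n) x i - i) = _
    by_cases hc1 : i ≤ j + 1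
    · have e1 : lastDescBefore (2 * n) x i = 0 := by
        apply lastDescBefore_eq (Or.inl rfl)
        intro d hd1 hd2 hd3 hd4
        have := (hdesc d hd2 hd3).1 hd4
        omega
      have e2 : nextDescFrom (2 * n) x i = j + 1 := by
        apply nextDescFrom_eq (Or.inr ⟨by omega, by omega,
          (hdesc (j + 1) (by omega) (by omega)).2 (Or.inl rfl)⟩) (by omega)
        intro d hd1 hd2 hd3
        have := (hdesc d (by omega) hd2).1 hd3
        omega
      rw [e1, e2, if_pos hc1]
      congr 1
      omega
    · by_cases hc2 : i ≤ 2 * n - j - 1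
      · have e1 : lastDescBefore (2 * n) x i = j + 1 := by
          apply lastDescBefore_eq (Or.inr ⟨by omega, by omega, by omega,
            (hdesc (j + 1) (by omega) (by omega)).2 (Or.inl rfl)⟩)
          intro d hd1 hd2 hd3 hd4
          have := (hdesc d hd2 hd3).1 hd4
          omega
        have e2 : nextDescFrom (2 * n) x i = 2 * n - j - 1 := by
          apply nextDescFrom_eq (Or.inr ⟨by omega, by omega,
            (hdesc (2 * n - j - 1) (by omega) (by omega)).2 (Or.inr rfl)⟩) (by omega)
          intro d hd1 hd2 hd3
          have := (hdesc d (by omega) hd2).1 hd3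
          omega
        rw [e1, e2, if_neg hc1, if_pos hc2]
        congr 1
        omega
      · have e1 : lastDescBefore (2 * n) x i = 2 * n - j - 1 := by
          apply lastDescBefore_eq (Or.inr ⟨by omega, by omega, by omega,
            (hdesc (2 * n - j - 1) (by omega) (by omega)).2 (Or.inr rfl)⟩)
          intro d hd1 hd2 hd3 hd4
          have := (hdesc d hd2 hd3).1 hd4
          omega
        have e2 : nextDescFrom (2 * n) x i = 2 * n := by
          apply nextDescFrom_eq (Or.inl rfl) (by omega)
          intro d hd1 hd2 hd3
          have := (hdesc d (by omega) hd2).1 hd3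
          omega
        rw [e1, e2, if_neg hc1, if_neg hc2]
        congr 1
        omega
  -- explicit values of y = revAscRuns x
  have hyval : ∀ i, 1 ≤ i → i ≤ 2 * n → revAscRuns (2 * n) x i =
      (if i ≤ j then 2 * n - i else if i = j + 1 then 1
       else if i ≤ 2 * n - j - 1 then 2 * n + 1 - i
       else if i = 2 * n - j then 2 * n else 2 * n + 2 - i) := by
    intro i h1 h2
    rw [hy i h1 h2, hx]
    split_ifs <;> omega
  -- ascents of y
  have hasc : ∀ d, 1 ≤ d → d < 2 * n →
      (revAscRuns (2 * n) x d < revAscRuns (2 * n) x (d + 1) ↔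
        (d = j + 1 ∨ d = 2 * n - j - 1)) := by
    intro d h1 h2
    rw [hyval d (by omega) (by omega), hyval (d + 1) (by omega) (by omega)]
    split_ifs <;> omega
  -- revDescRuns of y equals y ∘ σ on [1, 2n]
  have hz : ∀ i, 1 ≤ i → i ≤ 2 * n → revDescRuns (2 * n) (revAscRuns (2 * n) x) i =
      revAscRuns (2 * n) x (if i ≤ j + 1 then j + 2 - i
        else if i ≤ 2 * n - j - 1 then 2 * n + 1 - i else 4 * n - j - i) := by
    intro i h1 h2
    show revAscRuns (2 * n) x (lastAscBefore (2 * n) (revAscRuns (2 * n) x) i + 1 +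
      nextAscFrom (2 * n) (revAscRuns (2 * n) x) i - i) = _
    by_cases hc1 : i ≤ j + 1
    · have e1 : lastAscBefore (2 * n) (revAscRuns (2 * n) x) i = 0 := by
        apply lastAscBefore_eq (Or.inl rfl)
        intro d hd1 hd2 hd3 hd4
        have := (hasc d hd2 hd3).1 hd4
        omega
      have e2 : nextAscFrom (2 * n) (revAscRuns (2 * n) x) i = j + 1 := by
        apply nextAscFrom_eq (Or.inr ⟨by omega, by omega,
          (hasc (j + 1) (by omega) (by omega)).2 (Or.inl rfl)⟩) (by omega)
        intro d hd1 hd2 hd3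
        have := (hasc d (by omega) hd2).1 hd3
        omega
      rw [e1, e2, if_pos hc1]
      congr 1
      omega
    · by_cases hc2 : i ≤ 2 * n - j - 1
      · have e1 : lastAscBefore (2 * n) (revAscRuns (2 * n) x) i = j + 1 := by
          apply lastAscBefore_eq (Or.inr ⟨by omega, by omega, by omega,
            (hasc (j + 1) (by omega) (by omega)).2 (Or.inl rfl)⟩)
          intro d hd1 hd2 hd3 hd4
          have := (hasc d hd2 hd3).1 hd4
          omega
        have e2 : nextAscFrom (2 * n) (revAscRuns (2 * n) x) i = 2 * n - j - 1 := by
          apply nextAscFrom_eq (Or.inr ⟨by omega, by omega,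
            (hasc (2 * n - j - 1) (by omega) (by omega)).2 (Or.inr rfl)⟩) (by omega)
          intro d hd1 hd2 hd3
          have := (hasc d (by omega) hd2).1 hd3
          omega
        rw [e1, e2, if_neg hc1, if_pos hc2]
        congr 1
        omega
      · have e1 : lastAscBefore (2 * n) (revAscRuns (2 * n) x) i = 2 * n - j - 1 := by
          apply lastAscBefore_eq (Or.inr ⟨by omega, by omega, by omega,
            (hasc (2 * n - j - 1) (by omega) (by omega)).2 (Or.inr rfl)⟩)
          intro d hd1 hd2 hd3 hd4
          have := (hasc d hd2 hd3).1 hd4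
          omega
        have e2 : nextAscFrom (2 * n) (revAscRuns (2 * n) x) i = 2 * n := by
          apply nextAscFrom_eq (Or.inl rfl) (by omega)
          intro d hd1 hd2 hd3
          have := (hasc d (by omega) hd2).1 hd3
          omega
        rw [e1, e2, if_neg hc1, if_neg hc2]
        congr 1
        omega
  refine ⟨?_, ?_, ?_⟩
  · -- BijOn via x being an involution on [1, 2n]
    have hmap : Set.MapsTo x (Set.Icc 1 (2 * n)) (Set.Icc 1 (2 * n)) := by
      intro i hi
      simp only [Set.mem_Icc] at *
      rw [hx]
      split_ifs <;> omega
    have hinv : ∀ i ∈ Set.Icc 1 (2 * n), x (x i) = i := by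
      intro i hi
      simp only [Set.mem_Icc] at hi
      by_cases c1 : i = 1
      · rw [c1, hv1, hv1]
      · by_cases c2 : i ≤ j + 1
        · rw [hv2 i (by omega) (by omega), hv4 _ (by omega) (by omega)]; omega
        · by_cases c3 : i ≤ 2 * n - j - 1
          · rw [hv3 i (by omega) (by omega), hv3 i (by omega) (by omega)]
          · by_cases c4 : i ≤ 2 * n - 1
            · rw [hv4 i (by omega) (by omega), hv2 _ (by omega) (by omega)]; omega
            · have : i = 2 * n := by omega
              rw [this, hv5, hv5]
    exact Set.InvOn.bijOn ⟨fun i hi => hinv i hi, fun i hi => hinv i hi⟩ hmap hmap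
  · intro i h1 h2
    rw [hx i, hx (2 * n + 1 - i)]
    split_ifs <;> omega
  · intro i h1 h2
    rw [hz i h1 h2]
    by_cases hc1 : i ≤ j + 1
    · rw [if_pos hc1, hy (j + 2 - i) (by omega) (by omega),
        if_pos (by omega : j + 2 - i ≤ j + 1)]
      congr 1
      omega
    · by_cases hc2 : i ≤ 2 * n - j - 1
      · rw [if_neg hc1, if_pos hc2, hy (2 * n + 1 - i) (by omega) (by omega),
          if_neg (by omega : ¬ 2 * n + 1 - i ≤ j + 1),
          if_pos (by omega : 2 * n + 1 - i ≤ 2 * n - j - 1)]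
        congr 1
        omega
      · rw [if_neg hc1, if_neg hc2, hy (4 * n - j - i) (by omega) (by omega),
          if_neg (by omega : ¬ 4 * n - j - i ≤ j + 1),
          if_neg (by omega : ¬ 4 * n - j - i ≤ 2 * n - j - 1)]
        congr 1
        omega
end

section
/- In the formal power series ring Q[[x,y]], let L(x,y) = (1 − (2xy/(1−x))²)^(1/2), defined via the binomial series. Then 1/(1−x) + ((1+x)/(2x(1−x)))·(1/L(x,y) − 1) = ∑_{n≥0} ∑_{k≥0} binomial(n, k)·binomial(n+1−k, k)·x^n·y^(2k). -/
open Finset MvPowerSeries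

private lemma sum_refl_aux (m : ℕ) (f : ℕ → ℕ → ℚ) (hf : ∀ i j, f i j = f j i) :
    ∑ i ∈ range (m+1), (i:ℚ) * f i (m - i) = ∑ i ∈ range (m+1), ((m - i : ℕ):ℚ) * f i (m - i) := by
  rw [← Finset.sum_range_reflect (fun i => ((m - i : ℕ):ℚ) * f i (m - i)) (m+1)]
  apply Finset.sum_congr rfl
  intro i hi
  have hi' : i ≤ m := by simpa [Finset.mem_range, Nat.lt_succ_iff] using hi
  have h1 : m + 1 - 1 - i = m - i := by omega
  have h2 : m - (m - i) = i := by omega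
  rw [h1, h2, hf]

private lemma sumid (m : ℕ) (f : ℕ → ℕ → ℚ) (hf : ∀ i j, f i j = f j i) :
    (m:ℚ) * ∑ i ∈ range (m+1), f i (m - i) = 2 * ∑ i ∈ range (m+1), (i:ℚ) * f i (m - i) := by
  have : (m:ℚ) * ∑ i ∈ range (m+1), f i (m - i)
      = ∑ i ∈ range (m+1), ((i:ℚ) + ((m - i : ℕ):ℚ)) * f i (m - i) := by
    rw [Finset.mul_sum]
    apply Finset.sum_congr rfl
    intro i hi
    have hi' : i ≤ m := by simpa [Finset.mem_range, Nat.lt_succ_iff] using hi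
    have : ((i:ℚ) + ((m - i : ℕ):ℚ)) = (m:ℚ) := by
      have : ((m - i : ℕ):ℚ) = (m:ℚ) - (i:ℚ) := by
        push_cast [hi']; ring
      rw [this]; ring
    rw [this]
  rw [this]
  simp only [add_mul]
  rw [Finset.sum_add_distrib, ← sum_refl_aux m f hf]
  ring

lemma centralBinom_conv (n : ℕ) :
    ∑ i ∈ range (n+1), (Nat.centralBinom i : ℚ) * Nat.centralBinom (n - i) = 4 ^ n := by
  induction n with
  | zero => simp [Nat.centralBinom]
  | succ n ih =>
      set a : ℕ → ℚ := fun i => (Nat.centralBinom i : ℚ) with ha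
      have hf : ∀ i j, a i * a j = a j * a i := fun i j => mul_comm _ _
      have hrec : ∀ i : ℕ, ((i:ℚ)+1) * a (i+1) = 2 * (2*(i:ℚ)+1) * a i := by
        intro i
        have := Nat.succ_mul_centralBinom_succ i
        have h2 : (((i+1) * Nat.centralBinom (i+1) : ℕ) : ℚ)
            = ((2 * (2*i+1) * Nat.centralBinom i : ℕ) : ℚ) := by rw [this]
        push_cast at h2
        push_cast [ha]
        linarith [h2]
      have key : ((n:ℚ)+1) * ∑ i ∈ range (n+2), a i * a (n+1-i)
          = 4 * (((n:ℚ)+1) * ∑ i ∈ range (n+1), a i * a (n-i)) := by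
        have e1 := sumid (n+1) (fun i j => a i * a j) hf
        push_cast at e1
        rw [e1]
        have e2 : ∑ i ∈ range (n+2), (i:ℚ) * (a i * a (n+1-i))
            = ∑ i ∈ range (n+1), ((i:ℚ)+1) * (a (i+1) * a (n-i)) := by
          rw [Finset.sum_range_succ' (fun i => (i:ℚ) * (a i * a (n+1-i))) (n+1)]
          simp only [Nat.cast_zero, zero_mul, add_zero]
          apply Finset.sum_congr rfl
          intro i hi
          have : n + 1 - (i+1) = n - i := by omega
          rw [this]
          push_cast
          ring
        rw [e2]
        have e3 : ∑ i ∈ range (n+1), ((i:ℚ)+1) * (a (i+1) * a (n-i))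
            = ∑ i ∈ range (n+1), (2 * (2*(i:ℚ)+1) * a i) * a (n-i) := by
          apply Finset.sum_congr rfl
          intro i _
          rw [← mul_assoc, hrec i]
        rw [e3]
        have e4 := sumid n (fun i j => a i * a j) hf
        have : ∑ i ∈ range (n+1), (2 * (2*(i:ℚ)+1) * a i) * a (n-i)
            = 4 * (∑ i ∈ range (n+1), (i:ℚ) * (a i * a (n-i))) + 2 * ∑ i ∈ range (n+1), a i * a (n-i) := by
          rw [Finset.mul_sum, Finset.mul_sum, ← Finset.sum_add_distrib]
          apply Finset.sum_congr rfl
          intro i _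
          ring
        rw [this]
        linarith [e4]
      have hne : ((n:ℚ)+1) ≠ 0 := by positivity
      apply mul_left_cancel₀ hne
      have : ∑ i ∈ range (n+1+1), a i * a (n+1-i) = ∑ i ∈ range (n+2), a i * a (n+1-i) := rfl
      rw [this, key, ih]
      ring


lemma choose_conv (p : ℕ) : ∀ n q : ℕ,
    ∑ a ∈ range (n+1), (a.choose p) * ((n - a).choose q) = (n+1).choose (p+q+1) := by
  intro n
  induction n with
  | zero =>
      intro q
      simp only [range_one, sum_singleton, Nat.zero_sub]
      rcases Nat.eq_zero_or_pos (p+q) with h | h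
      · have hp : p = 0 := by omega
        have hq : q = 0 := by omega
        subst hp; subst hq; simp
      · rw [Nat.choose_eq_zero_of_lt (by omega : 1 < p+q+1)]
        rcases Nat.eq_zero_or_pos p with hp | hp
        · have hq : 0 < q := by omega
          simp [hp, Nat.choose_eq_zero_of_lt hq]
        · simp [Nat.choose_eq_zero_of_lt hp]
  | succ n ih =>
      intro q
      rw [Finset.sum_range_succ]
      rcases Nat.eq_zero_or_pos q with hq | hq
      · subst hq
        have h0 : ∑ a ∈ range (n+1), (a.choose p) * ((n + 1 - a).choose 0)
            = ∑ a ∈ range (n+1), (a.choose p) * ((n - a).choose 0) := by simp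
        rw [h0, ih 0]
        simp only [Nat.choose_zero_right, mul_one, Nat.add_zero]
        have h1 := Nat.choose_succ_succ (n+1) p
        simp only [Nat.succ_eq_add_one] at h1
        omega
      · obtain ⟨q', rfl⟩ : ∃ q', q = q' + 1 := ⟨q - 1, by omega⟩
        rw [Nat.sub_self, Nat.choose_eq_zero_of_lt (by omega : 0 < q'+1), mul_zero, add_zero]
        have h0 : ∑ a ∈ range (n+1), (a.choose p) * ((n + 1 - a).choose (q'+1))
            = ∑ a ∈ range (n+1), ((a.choose p) * ((n - a).choose (q'+1)) + (a.choose p) * ((n - a).choose q')) := by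
          apply Finset.sum_congr rfl
          intro a ha
          have ha' : a ≤ n := by simpa [Finset.mem_range, Nat.lt_succ_iff] using ha
          have hsub : n + 1 - a = (n - a) + 1 := by omega
          rw [hsub, Nat.choose_succ_succ]
          ring
        rw [h0, Finset.sum_add_distrib, ih (q'+1), ih q']
        have e : p + (q'+1) + 1 = p + q' + 1 + 1 := by omega
        rw [e, Nat.choose_succ_succ (n+1) (p+q'+1)]
        simp only [Nat.succ_eq_add_one]
        omega


lemma I1 (n k : ℕ) :
    2 * (n.choose k : ℚ) * ((n+1-k).choose k : ℚ)
      = (Nat.centralBinom k : ℚ) * ((n.choose (2*k) : ℚ) + ((n+1).choose (2*k) : ℚ)) := by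
  rcases Nat.eq_zero_or_pos k with hk | hk
  · subst hk; simp [Nat.centralBinom]; ring
  rcases le_or_gt k n with hkn | hkn
  · -- main case 1 ≤ k ≤ n
    -- trinomial revisions
    have h3a : n.choose (2*k) * (2*k).choose k = n.choose k * (n-k).choose k := by
      rcases le_or_gt (2*k) n with h | h
      · have := Nat.choose_mul (n := n) (k := 2*k) (s := k) (by omega)
        rw [this]
        congr 2
        omega
      · rw [Nat.choose_eq_zero_of_lt h, Nat.choose_eq_zero_of_lt (by omega : n - k < k)]
        ring
    have h3b : (n+1).choose (2*k) * (2*k).choose k = (n+1).choose k * (n+1-k).choose k := by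
      rcases le_or_gt (2*k) (n+1) with h | h
      · have := Nat.choose_mul (n := n+1) (k := 2*k) (s := k) (by omega)
        rw [this]
        congr 2
        omega
      · rw [Nat.choose_eq_zero_of_lt h, Nat.choose_eq_zero_of_lt (by omega : n + 1 - k < k)]
        ring
    have hX : n.choose k * (n-k).choose (k-1) = n.choose (k-1) * (n+1-k).choose k := by
      rcases le_or_gt (2*k-1) n with h | h
      · have e1 := Nat.choose_mul (n := n) (k := 2*k-1) (s := k) (by omega)
        have e2 := Nat.choose_mul (n := n) (k := 2*k-1) (s := k-1) (by omega)
        have esymm : (2*k-1).choose k = (2*k-1).choose (k-1) := by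
          have := Nat.choose_symm (n := 2*k-1) (k := k) (by omega)
          rw [← this]
          congr 1
          omega
        have f1 : 2*k-1-k = k-1 := by omega
        have f2 : 2*k-1-(k-1) = k := by omega
        have f3 : n - (k-1) = n+1-k := by omega
        rw [f1] at e1
        rw [f2, f3] at e2
        rw [← e1, ← e2, esymm]
      · rw [Nat.choose_eq_zero_of_lt (by omega : n - k < k - 1),
          Nat.choose_eq_zero_of_lt (by omega : n + 1 - k < k)]
        ring
    have hp1 : (n+1).choose k = n.choose (k-1) + n.choose k := by
      obtain ⟨k', rfl⟩ : ∃ k', k = k' + 1 := ⟨k - 1, by omega⟩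
      simpa using Nat.choose_succ_succ n k'
    have hp2 : (n+1-k).choose k = (n-k).choose (k-1) + (n-k).choose k := by
      obtain ⟨k', rfl⟩ : ∃ k', k = k' + 1 := ⟨k - 1, by omega⟩
      have : n + 1 - (k'+1) = (n - (k'+1)) + 1 := by omega
      rw [this]
      simpa using Nat.choose_succ_succ (n - (k'+1)) k'
    have hcb : (Nat.centralBinom k : ℚ) = ((2*k).choose k : ℚ) := by
      simp [Nat.centralBinom]
    rw [hcb]
    have q3a : ((n.choose (2*k) : ℚ)) * ((2*k).choose k : ℚ) = (n.choose k : ℚ) * ((n-k).choose k : ℚ) := by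
      exact_mod_cast congrArg (Nat.cast : ℕ → ℚ) h3a
    have q3b : (((n+1).choose (2*k) : ℚ)) * ((2*k).choose k : ℚ) = ((n+1).choose k : ℚ) * ((n+1-k).choose k : ℚ) := by
      exact_mod_cast congrArg (Nat.cast : ℕ → ℚ) h3b
    have qX : (n.choose k : ℚ) * ((n-k).choose (k-1) : ℚ) = (n.choose (k-1) : ℚ) * ((n+1-k).choose k : ℚ) := by
      exact_mod_cast congrArg (Nat.cast : ℕ → ℚ) hX
    have qp1 : ((n+1).choose k : ℚ) = (n.choose (k-1) : ℚ) + (n.choose k : ℚ) := by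
      exact_mod_cast congrArg (Nat.cast : ℕ → ℚ) hp1
    have qp2 : ((n+1-k).choose k : ℚ) = ((n-k).choose (k-1) : ℚ) + ((n-k).choose k : ℚ) := by
      exact_mod_cast congrArg (Nat.cast : ℕ → ℚ) hp2
    linear_combination (-1)*q3a + (-1)*q3b + qX - ((n+1-k).choose k : ℚ)*qp1 + (n.choose k : ℚ)*qp2
  · -- k > n : everything vanishes
    rw [Nat.choose_eq_zero_of_lt hkn, Nat.choose_eq_zero_of_lt (by omega : n < 2*k),
      Nat.choose_eq_zero_of_lt (by omega : n+1 < 2*k)]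
    simp


noncomputable abbrev mono (a b : ℕ) : Fin 2 →₀ ℕ := Finsupp.single 0 a + Finsupp.single 1 b

lemma mono_apply0 (a b : ℕ) : mono a b 0 = a := by
  simp [mono, Finsupp.single_apply]

lemma mono_apply1 (a b : ℕ) : mono a b 1 = b := by
  simp [mono, Finsupp.single_apply]

lemma eq_mono (d : Fin 2 →₀ ℕ) : d = mono (d 0) (d 1) := by
  ext i
  fin_cases i <;> simp [mono, Finsupp.single_apply]

lemma coeff_mul_split (f g : MvPowerSeries (Fin 2) ℚ) (n m : ℕ) :
    coeff (mono n m) (f * g) =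
      ∑ p ∈ Finset.HasAntidiagonal.antidiagonal n ×ˢ Finset.HasAntidiagonal.antidiagonal m,
        coeff (mono p.1.1 p.2.1) f * coeff (mono p.1.2 p.2.2) g := by
  classical
  rw [coeff_mul]
  apply Finset.sum_nbij' (i := fun e => ((e.1 0, e.2 0), (e.1 1, e.2 1)))
    (j := fun p => (mono p.1.1 p.2.1, mono p.1.2 p.2.2))
  · intro e he
    rw [Finset.HasAntidiagonal.mem_antidiagonal] at he
    have h0 : e.1 0 + e.2 0 = n := by
      have := congrArg (fun d => d 0) he
      simpa [mono, Finsupp.single_apply] using this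
    have h1 : e.1 1 + e.2 1 = m := by
      have := congrArg (fun d => d 1) he
      simpa [mono, Finsupp.single_apply] using this
    simp [Finset.mem_product, Finset.HasAntidiagonal.mem_antidiagonal, h0, h1]
  · intro p hp
    rw [Finset.mem_product, Finset.HasAntidiagonal.mem_antidiagonal, Finset.HasAntidiagonal.mem_antidiagonal] at hp
    rw [Finset.HasAntidiagonal.mem_antidiagonal]
    ext i
    fin_cases i <;> simp [mono, Finsupp.single_apply, hp.1, hp.2]
  · intro e he
    simp only
    rw [← eq_mono e.1, ← eq_mono e.2]
  · intro p hp
    simp [mono_apply0, mono_apply1]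
  · intro e he
    simp only
    conv_lhs => rw [eq_mono e.1, eq_mono e.2]


lemma even_pairs_sum : ∀ (h : ℕ → ℕ → ℚ) (k : ℕ),
    ∑ b ∈ range (2*k+1), (if Even b ∧ Even (2*k - b) then h (b/2) ((2*k-b)/2) else 0)
      = ∑ i ∈ range (k+1), h i (k-i) := by
  intro h k
  induction k generalizing h with
  | zero => simp
  | succ k ih =>
      have e1 : 2*(k+1)+1 = (2*k+1) + 1 + 1 := by ring
      rw [e1, Finset.sum_range_succ, Finset.sum_range_succ]
      have v1 : (if Even (2*k+1) ∧ Even (2*(k+1) - (2*k+1)) then h ((2*k+1)/2) ((2*(k+1)-(2*k+1))/2) else 0) = 0 := by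
        rw [if_neg]
        rintro ⟨he, -⟩
        simp [parity_simps] at he
      have v2 : (if Even (2*k+1+1) ∧ Even (2*(k+1) - (2*k+1+1)) then h ((2*k+1+1)/2) ((2*(k+1)-(2*k+1+1))/2) else 0) = h (k+1) 0 := by
        rw [if_pos]
        · congr 1 <;> omega
        constructor
        · exact ⟨k+1, by ring⟩
        · have : 2*(k+1) - (2*k+1+1) = 0 := by omega
          simp [this]
      rw [v1, v2, add_zero]
      have v3 : ∑ b ∈ range (2*k+1), (if Even b ∧ Even (2*(k+1) - b) then h (b/2) ((2*(k+1)-b)/2) else 0)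
          = ∑ b ∈ range (2*k+1), (if Even b ∧ Even (2*k - b) then (fun i j => h i (j+1)) (b/2) ((2*k-b)/2) else 0) := by
        apply Finset.sum_congr rfl
        intro b hb
        have hb' : b ≤ 2*k := by simpa [Finset.mem_range, Nat.lt_succ_iff] using hb
        have hc : (Even b ∧ Even (2*(k+1) - b)) ↔ (Even b ∧ Even (2*k - b)) := by
          constructor <;> rintro ⟨h1, h2⟩ <;> refine ⟨h1, ?_⟩
          · have : 2*(k+1) - b = (2*k - b) + 2 := by omega
            rw [this] at h2
            simpa [parity_simps] using h2
          · have : 2*(k+1) - b = (2*k - b) + 2 := by omega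
            rw [this]
            simpa [parity_simps] using h2
        split_ifs with hh1 hh2 hh2
        · obtain ⟨h1, h2⟩ := hh2
          have : (2*(k+1)-b)/2 = (2*k-b)/2 + 1 := by omega
          rw [this]
        · exact absurd (hc.mp hh1) hh2
        · exact absurd (hc.mpr hh2) hh1
        · rfl
      rw [v3, ih (fun i j => h i (j+1))]
      rw [Finset.sum_range_succ]
      rw [Finset.sum_range_succ (fun i => h i (k+1-i)) (k+1), Finset.sum_range_succ (fun i => h i (k+1-i)) k]
      have g1 : k + 1 - (k+1) = 0 := by omega
      have g2 : k + 1 - k = 1 := by omega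
      rw [g1, g2]
      have g3 : ∑ x ∈ range k, h x (k - x + 1) = ∑ x ∈ range k, h x (k + 1 - x) := by
        apply Finset.sum_congr rfl
        intro i hi
        have : i < k := by simpa [Finset.mem_range] using hi
        have : k - i + 1 = k + 1 - i := by omega
        rw [this]
      rw [g3]
      simp only [Nat.sub_self, zero_add]
      try ring

noncomputable def V : MvPowerSeries (Fin 2) ℚ :=
  fun d => if Even (d 1) then (Nat.centralBinom (d 1 / 2) : ℚ) * ((d 0).choose (d 1) : ℚ) else 0

noncomputable def W : MvPowerSeries (Fin 2) ℚ :=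
  fun d => if Even (d 1) then (4:ℚ)^(d 1 / 2) * (((d 0)+1).choose ((d 1)+1) : ℚ) else 0

lemma coeff_V (a b : ℕ) : coeff (mono a b) V
    = if Even b then (Nat.centralBinom (b / 2) : ℚ) * (a.choose b : ℚ) else 0 := by
  rw [coeff_apply]
  simp only [V, mono_apply0, mono_apply1]

lemma coeff_W (a b : ℕ) : coeff (mono a b) W
    = if Even b then (4:ℚ)^(b / 2) * ((a+1).choose (b+1) : ℚ) else 0 := by
  rw [coeff_apply]
  simp only [W, mono_apply0, mono_apply1]

lemma innerSumV (n m b b' : ℕ) (hbb : b + b' = m) :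
    ∑ x ∈ Finset.HasAntidiagonal.antidiagonal n, coeff (mono x.1 b) V * coeff (mono x.2 b') V
      = if Even b ∧ Even b' then
          (Nat.centralBinom (b/2) : ℚ) * (Nat.centralBinom (b'/2) : ℚ) * (((n+1).choose (b+b'+1)) : ℚ)
        else 0 := by
  by_cases hb : Even b
  · by_cases hb' : Even b'
    · rw [if_pos ⟨hb, hb'⟩]
      have : ∀ x ∈ Finset.HasAntidiagonal.antidiagonal n, coeff (mono x.1 b) V * coeff (mono x.2 b') V
          = (Nat.centralBinom (b/2) : ℚ) * (Nat.centralBinom (b'/2) : ℚ)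
            * ((x.1.choose b : ℚ) * (x.2.choose b' : ℚ)) := by
        intro x _
        rw [coeff_V, coeff_V, if_pos hb, if_pos hb']
        ring
      rw [Finset.sum_congr rfl this, ← Finset.mul_sum]
      congr 1
      rw [Finset.Nat.sum_antidiagonal_eq_sum_range_succ_mk]
      have := choose_conv b n b'
      have hcast : ((∑ a ∈ range (n+1), (a.choose b) * ((n - a).choose b') : ℕ) : ℚ)
          = (((n+1).choose (b+b'+1)) : ℚ) := by rw [this]
      push_cast at hcast
      simpa using hcast
    · rw [if_neg (by tauto)]
      apply Finset.sum_eq_zero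
      intro x _
      rw [coeff_V (x.2) b', if_neg hb', mul_zero]
  · rw [if_neg (by tauto)]
    apply Finset.sum_eq_zero
    intro x _
    rw [coeff_V (x.1) b, if_neg hb, zero_mul]

lemma VV_coeff (n m : ℕ) : coeff (mono n m) (V * V) = coeff (mono n m) W := by
  rw [coeff_mul_split, coeff_W, Finset.sum_product, Finset.sum_comm]
  have step1 : ∀ y ∈ Finset.HasAntidiagonal.antidiagonal m,
      (∑ x ∈ Finset.HasAntidiagonal.antidiagonal n, coeff (mono x.1 y.1) V * coeff (mono x.2 y.2) V)
      = if Even y.1 ∧ Even y.2 then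
          (Nat.centralBinom (y.1/2) : ℚ) * (Nat.centralBinom (y.2/2) : ℚ) * (((n+1).choose (m+1)) : ℚ)
        else 0 := by
    intro y hy
    have hyy : y.1 + y.2 = m := by simpa [Finset.HasAntidiagonal.mem_antidiagonal] using hy
    rw [innerSumV n m y.1 y.2 hyy, hyy]
  rw [Finset.sum_congr rfl step1]
  rw [Finset.Nat.sum_antidiagonal_eq_sum_range_succ_mk]
  by_cases hme : Even m
  · obtain ⟨k, hk⟩ := hme
    have hk2 : m = 2*k := by omega
    subst hk2
    rw [if_pos ⟨k, by ring⟩]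
    have := even_pairs_sum (fun i j => (Nat.centralBinom i : ℚ) * (Nat.centralBinom j : ℚ) * (((n+1).choose (2*k+1)) : ℚ)) k
    rw [this]
    have : ∑ i ∈ range (k+1), (Nat.centralBinom i : ℚ) * (Nat.centralBinom (k-i) : ℚ) * (((n+1).choose (2*k+1)) : ℚ)
        = (∑ i ∈ range (k+1), (Nat.centralBinom i : ℚ) * (Nat.centralBinom (k-i) : ℚ)) * (((n+1).choose (2*k+1)) : ℚ) := by
      rw [Finset.sum_mul]
    rw [this, centralBinom_conv k]
    have : (2*k)/2 = k := by omega
    rw [this]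
  · rw [if_neg hme]
    apply Finset.sum_eq_zero
    intro b hb
    rw [if_neg]
    rintro ⟨h1, h2⟩
    have hbm : b ≤ m := by simpa [Finset.mem_range, Nat.lt_succ_iff] using hb
    obtain ⟨p, hp⟩ := h1
    obtain ⟨q, hq⟩ := h2
    exact hme ⟨p+q, by omega⟩

lemma VV_s17 : V * V = W := by
  ext d
  rw [eq_mono d]
  exact VV_coeff _ _

lemma single0_le_mono (a n m : ℕ) : (Finsupp.single (0 : Fin 2) a ≤ mono n m) ↔ a ≤ n := by
  rw [Finsupp.le_def]
  constructor
  · intro h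
    have := h 0
    simpa [Finsupp.single_apply, mono_apply0] using this
  · intro h i
    fin_cases i <;> simp [Finsupp.single_apply, mono, Fin.ext_iff] <;> omega

lemma single1_le_mono (b n m : ℕ) : (Finsupp.single (1 : Fin 2) b ≤ mono n m) ↔ b ≤ m := by
  rw [Finsupp.le_def]
  constructor
  · intro h
    have := h 1
    simpa [Finsupp.single_apply, mono_apply1] using this
  · intro h i
    fin_cases i <;> simp [Finsupp.single_apply, mono, Fin.ext_iff] <;> omega

lemma mono_sub0 (a n m : ℕ) : mono n m - Finsupp.single (0:Fin 2) a = mono (n-a) m := by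
  ext i
  fin_cases i <;> simp [Finsupp.tsub_apply, Finsupp.single_apply, mono, Fin.ext_iff]

lemma mono_sub1 (b n m : ℕ) : mono n m - Finsupp.single (1:Fin 2) b = mono n (m-b) := by
  ext i
  fin_cases i <;> simp [Finsupp.tsub_apply, Finsupp.single_apply, mono, Fin.ext_iff]

lemma coeff_XXF (a b n m : ℕ) (F : MvPowerSeries (Fin 2) ℚ) :
    coeff (mono n m) ((X 0)^a * ((X 1)^b * F))
      = if a ≤ n ∧ b ≤ m then coeff (mono (n-a) (m-b)) F else 0 := by
  rw [X_pow_eq, X_pow_eq, coeff_monomial_mul]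
  by_cases ha : a ≤ n
  · rw [if_pos ((single0_le_mono a n m).mpr ha), one_mul, mono_sub0, coeff_monomial_mul]
    by_cases hb : b ≤ m
    · rw [if_pos ((single1_le_mono b (n-a) m).mpr hb), one_mul, mono_sub1, if_pos ⟨ha, hb⟩]
    · rw [if_neg (fun hc => hb ((single1_le_mono b (n-a) m).mp hc)), if_neg (by tauto)]
  · rw [if_neg (fun hc => ha ((single0_le_mono a n m).mp hc)), if_neg (by tauto)]

lemma coeff_Qmul (n m : ℕ) (F : MvPowerSeries (Fin 2) ℚ) :
    coeff (mono n m) ((((1 : MvPowerSeries (Fin 2) ℚ) - X 0)^2 - (2 * X 0 * X 1)^2) * F)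
      = coeff (mono n m) F
        - 2 * (if 1 ≤ n then coeff (mono (n-1) m) F else 0)
        + (if 2 ≤ n then coeff (mono (n-2) m) F else 0)
        - 4 * (if 2 ≤ n ∧ 2 ≤ m then coeff (mono (n-2) (m-2)) F else 0) := by
  have expand : (((1 : MvPowerSeries (Fin 2) ℚ) - X 0)^2 - (2 * X 0 * X 1)^2) * F
      = F - C 2 * ((X 0)^1 * ((X 1)^0 * F)) + (X 0)^2 * ((X 1)^0 * F)
        - C 4 * ((X 0)^2 * ((X 1)^2 * F)) := by
    rw [map_ofNat, map_ofNat]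
    ring
  rw [expand, map_sub, map_add, map_sub, coeff_C_mul, coeff_C_mul,
    coeff_XXF, coeff_XXF, coeff_XXF]
  have h0 : ∀ j : ℕ, (0 ≤ j) = True := fun j => by simp
  simp only [Nat.zero_le, and_true, Nat.sub_zero]


lemma Wnum (n m : ℕ) :
    (if Even m then (4:ℚ)^(m/2) * (((n+1).choose (m+1)):ℚ) else 0)
      - 2 * (if 1 ≤ n then (if Even m then (4:ℚ)^(m/2) * (((n-1+1).choose (m+1)):ℚ) else 0) else 0)
      + (if 2 ≤ n then (if Even m then (4:ℚ)^(m/2) * (((n-2+1).choose (m+1)):ℚ) else 0) else 0)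
      - 4 * (if 2 ≤ n ∧ 2 ≤ m then (if Even (m-2) then (4:ℚ)^((m-2)/2) * (((n-2+1).choose (m-2+1)):ℚ) else 0) else 0)
      = if n = 0 ∧ m = 0 then 1 else 0 := by
  by_cases hm : Even m
  · -- m even
    obtain ⟨k, hk⟩ := hm
    have hk2 : m = 2*k := by omega
    subst hk2
    have hme : Even (2*k) := ⟨k, by ring⟩
    have hdiv : (2*k)/2 = k := by omega
    simp only [if_pos hme, hdiv]
    rcases n with _ | _ | n'
    · -- n = 0
      rw [if_neg (by omega : ¬(1:ℕ) ≤ 0), if_neg (by omega : ¬(2:ℕ) ≤ 0),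
        if_neg (by omega : ¬((2:ℕ) ≤ 0 ∧ (2:ℕ) ≤ 2*k))]
      rcases Nat.eq_zero_or_pos k with hk0 | hk0
      · subst hk0; simp
      · rw [Nat.choose_eq_zero_of_lt (by omega : 1 < 2*k+1), if_neg (by omega : ¬((0:ℕ) = 0 ∧ 2*k = 0))]
        ring
    · -- n = 1
      rw [if_pos (by omega : (1:ℕ) ≤ 1), if_neg (by omega : ¬(2:ℕ) ≤ 1),
        if_neg (by omega : ¬((2:ℕ) ≤ 1 ∧ (2:ℕ) ≤ 2*k)),
        if_neg (by omega : ¬((1:ℕ) = 0 ∧ 2*k = 0))]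
      simp only [show (1:ℕ)-1+1 = 1 from rfl]
      rcases Nat.eq_zero_or_pos k with hk0 | hk0
      · subst hk0; norm_num
      · rw [Nat.choose_eq_zero_of_lt (by omega : 1 < 2*k+1),
          Nat.choose_eq_zero_of_lt (by omega : 2 < 2*k+1)]
        ring
    · -- n = n' + 2
      have g1 : (1:ℕ) ≤ n'+2 := by omega
      have g2 : (2:ℕ) ≤ n'+2 := by omega
      have e1 : n'+2-1+1 = n'+2 := by omega
      have e2 : n'+2-2+1 = n'+1 := by omega
      rw [if_pos g1, if_pos g2, e1, e2, if_neg (by omega : ¬((n'+2) = 0 ∧ 2*k = 0))]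
      rcases Nat.eq_zero_or_pos k with hk0 | hk0
      · subst hk0
        rw [if_neg (by omega : ¬((2:ℕ) ≤ n'+2 ∧ (2:ℕ) ≤ 2*0))]
        simp [Nat.choose_one_right]
        push_cast
        ring
      · obtain ⟨k', rfl⟩ : ∃ k', k = k' + 1 := ⟨k-1, by omega⟩
        have g3 : (2:ℕ) ≤ 2*(k'+1) := by omega
        have hev2 : Even (2*(k'+1) - 2) := ⟨k', by omega⟩
        have e3 : 2*(k'+1)-2 = 2*k' := by omega
        have e4 : (2*k')/2 = k' := by omega
        rw [if_pos ⟨g2, g3⟩, if_pos hev2, e3, e4]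
        have e5 : 2*k'+1 = 2*(k'+1)-1 := by omega
        -- Pascal facts
        have h1 := Nat.choose_succ_succ (n'+2) (2*(k'+1))
        have h2 := Nat.choose_succ_succ (n'+1) (2*(k'+1)-1)
        have h3 := Nat.choose_succ_succ (n'+1) (2*(k'+1))
        simp only [Nat.succ_eq_add_one] at h1 h2 h3
        have key : (n'+2+1).choose (2*(k'+1)+1) + (n'+1).choose (2*(k'+1)+1)
            = 2 * ((n'+2).choose (2*(k'+1)+1)) + (n'+1).choose (2*k'+1) := by
          have e6 : 2*(k'+1)-1+1 = 2*(k'+1) := by omega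
          have e7 : 2*k'+1 = 2*(k'+1)-1 := by omega
          have e8 : n'+1+1 = n'+2 := by omega
          rw [e6] at h2
          simp only [e8] at h2 h3
          rw [e7]
          omega
        have keyq : ((n'+2+1).choose (2*(k'+1)+1) : ℚ) + ((n'+1).choose (2*(k'+1)+1) : ℚ)
            = 2 * (((n'+2).choose (2*(k'+1)+1)) : ℚ) + ((n'+1).choose (2*k'+1) : ℚ) := by
          exact_mod_cast congrArg (Nat.cast : ℕ → ℚ) key
        have hpow : (4:ℚ)^(k'+1) = 4 * 4^k' := by ring
        linear_combination (4:ℚ)^(k'+1) * keyq + ((n'+1).choose (2*k'+1) : ℚ) * hpow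
  · -- m odd
    have hm1 : m % 2 = 1 := Nat.not_even_iff.mp hm
    have hmne : ¬(n = 0 ∧ m = 0) := by omega
    rw [if_neg hm, if_neg hmne]
    have t2 : (if 1 ≤ n then (if Even m then (4:ℚ)^(m/2) * (((n-1+1).choose (m+1)):ℚ) else 0) else 0) = 0 := by
      simp [hm]
    have t3 : (if 2 ≤ n then (if Even m then (4:ℚ)^(m/2) * (((n-2+1).choose (m+1)):ℚ) else 0) else 0) = 0 := by
      simp [hm]
    have t4 : (if 2 ≤ n ∧ 2 ≤ m then (if Even (m-2) then (4:ℚ)^((m-2)/2) * (((n-2+1).choose (m-2+1)):ℚ) else 0) else 0) = 0 := by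
      rcases le_or_gt 2 m with h | h
      · have : ¬ Even (m-2) := Nat.not_even_iff.mpr (by omega)
        simp [this]
      · rw [if_neg (by omega : ¬(2 ≤ n ∧ 2 ≤ m))]
    rw [t2, t3, t4]
    ring


lemma mono_eq_zero_iff (n m : ℕ) : mono n m = 0 ↔ n = 0 ∧ m = 0 := by
  constructor
  · intro h
    constructor
    · have := congrArg (fun f => f 0) h
      simpa [mono_apply0] using this
    · have := congrArg (fun f => f 1) h
      simpa [mono_apply1] using this
  · rintro ⟨rfl, rfl⟩
    simp [mono]

lemma QW : ((((1 : MvPowerSeries (Fin 2) ℚ) - X 0)^2 - (2 * X 0 * X 1)^2)) * W = 1 := by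
  ext d
  rw [eq_mono d, coeff_Qmul, coeff_one]
  simp only [mono_eq_zero_iff]
  rw [coeff_W, coeff_W, coeff_W, coeff_W]
  exact Wnum (d 0) (d 1)

lemma constCoeff_V : constantCoeff V = 1 := by
  have : constantCoeff V = coeff 0 V := rfl
  rw [this, coeff_apply]
  have h0 : ((0 : Fin 2 →₀ ℕ) 1) = 0 := rfl
  have h1 : ((0 : Fin 2 →₀ ℕ) 0) = 0 := rfl
  simp [V, h0, h1, Nat.centralBinom]


/-- In `ℚ[[x,y]]`, let `L(x,y) = (1 − (2xy/(1−x))²)^{1/2}` (the branch with constant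
term `1` given by the binomial series, characterized by `L²(1−x)² = (1−x)² − (2xy)²`).
Then `1/(1−x) + ((1+x)/(2x(1−x)))(1/L − 1) = ∑_{n,k} C(n,k)C(n+1−k,k) xⁿ y^{2k}`;
the equation defining the left-hand side `A` is stated with denominators cleared as
`2x(1−x)L·A = 2xL + (1+x)(1−L)`, which determines `A` uniquely. -/
theorem stmt_17 (L A : MvPowerSeries (Fin 2) ℚ)
    (hL : L ^ 2 * (1 - MvPowerSeries.X (0 : Fin 2)) ^ 2 =
      (1 - MvPowerSeries.X (0 : Fin 2)) ^ 2 -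
        (2 * MvPowerSeries.X 0 * MvPowerSeries.X 1) ^ 2)
    (hL0 : MvPowerSeries.constantCoeff L = 1)
    (hA : 2 * MvPowerSeries.X (0 : Fin 2) * (1 - MvPowerSeries.X 0) * L * A =
      2 * MvPowerSeries.X 0 * L + (1 + MvPowerSeries.X 0) * (1 - L)) :
    ∀ n k : ℕ,
      MvPowerSeries.coeff (Finsupp.single 0 n + Finsupp.single 1 (2 * k)) A =
        (n.choose k : ℚ) * ((n + 1 - k).choose k : ℚ) ∧
      MvPowerSeries.coeff (Finsupp.single 0 n + Finsupp.single 1 (2 * k + 1)) A = 0 := by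
  have h1 : L * ((1 - X 0) * (1 + 2 * X 0 * A)) = 1 + X (0 : Fin 2) := by
    linear_combination hA
  have hQ : (((1 : MvPowerSeries (Fin 2) ℚ) - X 0)^2 - (2 * X 0 * X 1)^2) * (1 + 2 * X 0 * A)^2
      = (1 + X 0)^2 := by
    linear_combination (-(1 + 2*X 0*A)^2) * hL + (L * (1 - X 0) * (1 + 2*X 0*A) + (1 + X 0)) * h1
  have hQU : (((1 : MvPowerSeries (Fin 2) ℚ) - X 0)^2 - (2 * X 0 * X 1)^2) * ((1 + X 0) * V)^2
      = (1 + X 0)^2 := by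
    linear_combination (1+X 0)^2 * QW
      + (1+X 0)^2 * ((((1 : MvPowerSeries (Fin 2) ℚ) - X 0)^2 - (2*X 0*X 1)^2)) * VV_s17
  have hQmem : (((1 : MvPowerSeries (Fin 2) ℚ) - X 0)^2 - (2 * X 0 * X 1)^2)
      ∈ nonZeroDivisors (MvPowerSeries (Fin 2) ℚ) := by
    apply mem_nonZeroDivisors_of_constantCoeff
    have : constantCoeff (((1 : MvPowerSeries (Fin 2) ℚ) - X 0)^2 - (2 * X 0 * X 1)^2) = 1 := by
      simp
    rw [this]
    exact mem_nonZeroDivisors_of_ne_zero one_ne_zero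
  have hsq : (1 + 2*X 0*A)^2 = ((1+X 0)*V)^2 := by
    have h0 : ((1 + 2*X 0*A)^2 - ((1+X 0)*V)^2)
        * (((1 : MvPowerSeries (Fin 2) ℚ) - X 0)^2 - (2 * X 0 * X 1)^2) = 0 := by
      linear_combination hQ - hQU
    have := (mem_nonZeroDivisors_iff_right.mp hQmem) _ h0
    linear_combination this
  have hsum_unit : IsUnit ((1 + 2*X 0*A) + (1+X 0)*V) := by
    rw [isUnit_iff_constantCoeff]
    have : constantCoeff ((1 + 2*X 0*A) + (1+X 0)*V) = 2 := by
      simp [map_add, map_mul, constCoeff_V]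
      norm_num
    rw [this]
    exact isUnit_iff_ne_zero.mpr (by norm_num)
  have hu : (1 + 2*X 0*A : MvPowerSeries (Fin 2) ℚ) = (1+X 0)*V := by
    have hz : ((1 + 2*X 0*A) - (1+X 0)*V) * ((1 + 2*X 0*A) + (1+X 0)*V) = 0 := by
      linear_combination hsq
    have := (IsUnit.mul_left_eq_zero hsum_unit).mp hz
    linear_combination this
  have hcoeff : ∀ n m : ℕ, 2 * coeff (mono n m) A
      = coeff (mono (n+1) m) V + coeff (mono n m) V := by
    intro n m
    have hres := congrArg (coeff (mono (n+1) m)) hu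
    have e1 : (1 + 2*X 0*A : MvPowerSeries (Fin 2) ℚ)
        = 1 + C 2 * ((X 0)^1 * ((X 1)^0 * A)) := by
      rw [map_ofNat]; ring
    have e2 : ((1+X 0)*V : MvPowerSeries (Fin 2) ℚ) = V + (X 0)^1 * ((X 1)^0 * V) := by
      ring
    rw [e1, e2, map_add, map_add, coeff_C_mul, coeff_XXF, coeff_XXF, coeff_one] at hres
    rw [if_neg (by rw [mono_eq_zero_iff]; omega), if_pos (by omega : 1 ≤ n+1 ∧ 0 ≤ m),
      if_pos (by omega : 1 ≤ n+1 ∧ 0 ≤ m)] at hres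
    have e3 : n+1-1 = n := by omega
    have e4 : m-0 = m := by omega
    rw [e3, e4] at hres
    linear_combination hres
  intro n k
  constructor
  · have h := hcoeff n (2*k)
    rw [coeff_V, coeff_V, if_pos ⟨k, by ring⟩, if_pos ⟨k, by ring⟩] at h
    have e5 : (2*k)/2 = k := by omega
    rw [e5] at h
    have hI := I1 n k
    apply mul_left_cancel₀ (by norm_num : (2:ℚ) ≠ 0)
    rw [h]
    linear_combination (-1) * hI
  · have h := hcoeff n (2*k+1)
    rw [coeff_V, coeff_V, if_neg (by simp [parity_simps]), if_neg (by simp [parity_simps])] at h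
    apply mul_left_cancel₀ (by norm_num : (2:ℚ) ≠ 0)
    rw [h]
    ring
end
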